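/- If H' is a 6-partite intersecting hypergraph with 8 edges and τ(H') = 4, then H' has exactly one vertex of degree 3 in each of its 6 parts (six vertices of degree 3 total, all in distinct parts). -/

import Mathlib

def Intersecting {V : Type*} (E : Finset (Finset V)) : Prop :=
  ∀ e ∈ E, ∀ f ∈ E, ∃ v, v ∈ e ∧ v ∈ f

def IsCover {V : Type*} (E : Finset (Finset V)) (C : Finset V) : Prop :=
  ∀ e ∈ E, ∃ v ∈ C, v ∈ e

noncomputable def coverNum {V : Type*} (E : Finset (Finset V)) : ℕ :=
  sInf {n | ∃ C : Finset V, IsCover E C ∧ C.card = n}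

def Partite {V : Type*} (r : ℕ) (part : V → Fin r) (E : Finset (Finset V)) : Prop :=
  ∀ e ∈ E, ∀ i : Fin r, (e.filter (fun v => part v = i)).card = 1

open Classical in
noncomputable def deg {V : Type*} (E : Finset (Finset V)) (v : V) : ℕ :=
  (E.filter (fun e => v ∈ e)).card

namespace StmtAux

open Finset Classical

variable {V : Type*}

private lemma nat_sq (d : ℕ) : d * d = d + d * (d - 1) := by
  cases d with
  | zero => rfl
  | succ n => simp [Nat.succ_sub_one]; ring

private lemma sum_ge_card {α : Type*} (s : Finset α) (f : α → ℕ)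
    (h : ∀ x ∈ s, 1 ≤ f x) : s.card ≤ ∑ x ∈ s, f x := by
  calc s.card = s.card • 1 := by simp
  _ ≤ ∑ x ∈ s, f x := Finset.card_nsmul_le_sum s f 1 h

private lemma sum_all_one {α : Type*} (s : Finset α) (f : α → ℕ)
    (h : ∀ x ∈ s, 1 ≤ f x) (h2 : ∑ x ∈ s, f x ≤ s.card) : ∀ x ∈ s, f x = 1 := by
  intro x hx
  by_contra hne
  have h2x : 2 ≤ f x := by have := h x hx; omega
  have hadd := Finset.add_sum_erase s f hx
  have hge : (s.erase x).card ≤ ∑ y ∈ s.erase x, f y :=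
    sum_ge_card _ _ (fun y hy => h y (Finset.mem_of_mem_erase hy))
  have hc : (s.erase x).card = s.card - 1 := Finset.card_erase_of_mem hx
  have hcard1 : 0 < s.card := Finset.card_pos.2 ⟨x, hx⟩
  omega

private lemma sum_one_special {α : Type*} (s : Finset α) (f : α → ℕ)
    (h : ∀ x ∈ s, 1 ≤ f x) {a : α} (ha : a ∈ s) (h2 : 2 ≤ f a) :
    s.card + 1 ≤ ∑ x ∈ s, f x := by
  have hadd := Finset.add_sum_erase s f ha
  have hge : (s.erase a).card ≤ ∑ y ∈ s.erase a, f y :=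
    sum_ge_card _ _ (fun y hy => h y (Finset.mem_of_mem_erase hy))
  have hc : (s.erase a).card = s.card - 1 := Finset.card_erase_of_mem ha
  have hcard1 : 0 < s.card := Finset.card_pos.2 ⟨a, ha⟩
  omega

private lemma sum_one_special_eq {α : Type*} (s : Finset α) (f : α → ℕ)
    (h : ∀ x ∈ s, 1 ≤ f x) {a : α} (ha : a ∈ s) (h2 : 2 ≤ f a)
    (heq : ∑ x ∈ s, f x ≤ s.card + 1) :
    f a = 2 ∧ ∀ x ∈ s, x ≠ a → f x = 1 := by
  have hadd := Finset.add_sum_erase s f ha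
  have hge : (s.erase a).card ≤ ∑ y ∈ s.erase a, f y :=
    sum_ge_card _ _ (fun y hy => h y (Finset.mem_of_mem_erase hy))
  have hc : (s.erase a).card = s.card - 1 := Finset.card_erase_of_mem ha
  have hcard1 : 0 < s.card := Finset.card_pos.2 ⟨a, ha⟩
  have hfa : f a = 2 := by omega
  refine ⟨hfa, ?_⟩
  have hle : ∑ y ∈ s.erase a, f y ≤ (s.erase a).card := by omega
  intro x hx hxa
  exact sum_all_one _ _ (fun y hy => h y (Finset.mem_of_mem_erase hy)) hle x
    (Finset.mem_erase.2 ⟨hxa, hx⟩)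

private lemma dc1 {α β : Type*} (s : Finset α) (t : Finset β) (R : α → β → Prop)
    [∀ a, DecidablePred (R a)] [∀ b, DecidablePred (fun a => R a b)] :
    ∑ a ∈ s, (t.filter (fun b => R a b)).card = ∑ b ∈ t, (s.filter (fun a => R a b)).card := by
  simp only [Finset.card_filter]
  exact Finset.sum_comm

private lemma dc2 {α β : Type*} (s : Finset α) (t u : Finset β) (R : α → β → Prop)
    [∀ a, DecidablePred (R a)] [∀ b c, Decidable (R b c)]
    [∀ b c, DecidablePred (fun a => R a b ∧ R a c)] :
    ∑ a ∈ s, (t.filter (fun b => R a b)).card * (u.filter (fun b => R a b)).card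
      = ∑ b ∈ t, ∑ c ∈ u, (s.filter (fun a => R a b ∧ R a c)).card := by
  simp only [Finset.card_filter]
  have key : ∀ a : α, (∑ b ∈ t, if R a b then 1 else 0) * (∑ c ∈ u, if R a c then 1 else 0)
      = ∑ b ∈ t, ∑ c ∈ u, if R a b ∧ R a c then 1 else 0 := by
    intro a
    rw [Finset.sum_mul_sum]
    refine Finset.sum_congr rfl fun b _ => Finset.sum_congr rfl fun c _ => ?_
    by_cases h1 : R a b <;> by_cases h2 : R a c <;> simp [h1, h2]
  rw [Finset.sum_congr rfl fun a _ => key a, Finset.sum_comm]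
  exact Finset.sum_congr rfl fun b _ => Finset.sum_comm
private lemma no_small_cover (E : Finset (Finset V)) (hτ : coverNum E = 4)
    (C : Finset V) (hC : IsCover E C) : 4 ≤ C.card := by
  have h : coverNum E ≤ C.card := Nat.sInf_le ⟨C, hC, rfl⟩
  omega

private lemma cover_two (E : Finset (Finset V)) (hi : Intersecting E) (v0 : V)
    (R : Finset (Finset V)) (hR : R ⊆ E) (h2 : R.card ≤ 2) :
    ∃ x : V, ∀ e ∈ R, x ∈ e := by
  rcases eq_or_ne R ∅ with h | h
  · exact ⟨v0, by simp [h]⟩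
  obtain ⟨e, he⟩ := Finset.nonempty_of_ne_empty h
  by_cases hall : ∀ f ∈ R, f = e
  · obtain ⟨x, hx, -⟩ := hi e (hR he) e (hR he)
    exact ⟨x, fun f hf => (hall f hf) ▸ hx⟩
  push_neg at hall
  obtain ⟨f, hf, hfe⟩ := hall
  obtain ⟨x, hx1, hx2⟩ := hi e (hR he) f (hR hf)
  refine ⟨x, fun g hg => ?_⟩
  rcases eq_or_ne g e with rfl | hge
  · exact hx1
  rcases eq_or_ne g f with rfl | hgf
  · exact hx2
  exfalso
  have hsub : ({e, f, g} : Finset (Finset V)) ⊆ R := by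
    intro y hy
    simp only [Finset.mem_insert, Finset.mem_singleton] at hy
    rcases hy with rfl | rfl | rfl <;> assumption
  have h3 : ({e, f, g} : Finset (Finset V)).card = 3 := by
    have he1 : e ∉ ({f, g} : Finset (Finset V)) := by
      simp only [Finset.mem_insert, Finset.mem_singleton]
      push_neg
      exact ⟨fun h' => hfe h'.symm, fun h' => hge h'.symm⟩
    have he2 : f ∉ ({g} : Finset (Finset V)) := by
      simp only [Finset.mem_singleton]
      exact fun h' => hgf h'.symm
    rw [Finset.card_insert_of_notMem he1, Finset.card_insert_of_notMem he2,
      Finset.card_singleton]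
  have := Finset.card_le_card hsub
  omega

private lemma cover_four (E : Finset (Finset V)) (hi : Intersecting E) (v0 : V)
    (R : Finset (Finset V)) (hR : R ⊆ E) (h4 : R.card ≤ 4) :
    ∃ x y : V, ∀ e ∈ R, x ∈ e ∨ y ∈ e := by
  by_cases h2 : R.card ≤ 2
  · obtain ⟨x, hx⟩ := cover_two E hi v0 R hR h2
    exact ⟨x, x, fun e he => Or.inl (hx e he)⟩
  push_neg at h2
  obtain ⟨t, hts, htc⟩ := Finset.exists_subset_card_eq (s := R) (n := 2) (by omega)
  obtain ⟨x, hx⟩ := cover_two E hi v0 t (hts.trans hR) (le_of_eq htc)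
  have hcd : (R \ t).card ≤ 2 := by
    have := Finset.card_sdiff_of_subset hts; omega
  obtain ⟨y, hy⟩ := cover_two E hi v0 (R \ t) ((Finset.sdiff_subset).trans hR) hcd
  refine ⟨x, y, fun e he => ?_⟩
  by_cases h : e ∈ t
  · exact Or.inl (hx e h)
  · exact Or.inr (hy e (Finset.mem_sdiff.2 ⟨he, h⟩))

private lemma card_triple_le (u v x : V) : ({u, v, x} : Finset V).card ≤ 3 := by
  apply le_trans (Finset.card_insert_le _ _)
  have := Finset.card_insert_le v ({x} : Finset V)
  simp at this ⊢
  omega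

private lemma deg_le_three (E : Finset (Finset V)) (hi : Intersecting E)
    (h8 : E.card = 8) (hτ : coverNum E = 4) (v0 : V) (v : V) : deg E v ≤ 3 := by
  by_contra h
  push_neg at h
  have hsplit := Finset.card_filter_add_card_filter_not (s := E) (p := fun e => v ∈ e)
  have hdeg : deg E v = (E.filter (fun e => v ∈ e)).card := rfl
  have hR : (E.filter (fun e => ¬ v ∈ e)).card ≤ 4 := by omega
  obtain ⟨x, y, hxy⟩ := cover_four E hi v0 _ (Finset.filter_subset _ _) hR
  have hcov : IsCover E {v, x, y} := by
    intro e he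
    by_cases hv : v ∈ e
    · exact ⟨v, by simp, hv⟩
    · rcases hxy e (Finset.mem_filter.2 ⟨he, hv⟩) with h' | h'
      · exact ⟨x, by simp, h'⟩
      · exact ⟨y, by simp, h'⟩
  have h4 := no_small_cover E hτ _ hcov
  have := card_triple_le v x y
  omega

private lemma deg3_share (E : Finset (Finset V)) (hi : Intersecting E)
    (h8 : E.card = 8) (hτ : coverNum E = 4) (v0 : V) {u v : V}
    (hu : deg E u = 3) (hv : deg E v = 3)
    (hno : ∀ e ∈ E, ¬ (u ∈ e ∧ v ∈ e)) : False := by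
  have hdisj : Disjoint (E.filter (fun e => u ∈ e)) (E.filter (fun e => v ∈ e)) := by
    rw [Finset.disjoint_left]
    intro e h1 h2
    exact hno e (Finset.mem_filter.1 h1).1 ⟨(Finset.mem_filter.1 h1).2, (Finset.mem_filter.1 h2).2⟩
  have hor : (E.filter (fun e => u ∈ e ∨ v ∈ e)).card = 6 := by
    rw [Finset.filter_or, Finset.card_union_of_disjoint hdisj]
    have h1 : (E.filter (fun e => u ∈ e)).card = 3 := hu
    have h2 : (E.filter (fun e => v ∈ e)).card = 3 := hv
    omega
  have hsplit := Finset.card_filter_add_card_filter_not (s := E)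
    (p := fun e => u ∈ e ∨ v ∈ e)
  have hR : (E.filter (fun e => ¬ (u ∈ e ∨ v ∈ e))).card ≤ 2 := by omega
  obtain ⟨x, hx⟩ := cover_two E hi v0 _ (Finset.filter_subset _ _) hR
  have hcov : IsCover E {u, v, x} := by
    intro e he
    by_cases h1 : u ∈ e
    · exact ⟨u, by simp, h1⟩
    by_cases h2 : v ∈ e
    · exact ⟨v, by simp, h2⟩
    · exact ⟨x, by simp, hx e (Finset.mem_filter.2 ⟨he, by tauto⟩)⟩
  have h4 := no_small_cover E hτ _ hcov
  have := card_triple_le u v x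
  omega

private lemma same_part_deg3 (part : V → Fin 6) (E : Finset (Finset V))
    (hp : Partite 6 part E) (hi : Intersecting E)
    (h8 : E.card = 8) (hτ : coverNum E = 4) (v0 : V) {u v : V}
    (hu : deg E u = 3) (hv : deg E v = 3) (huv : u ≠ v) (hpart : part u = part v) : False := by
  apply deg3_share E hi h8 hτ v0 hu hv
  intro e he ⟨h1, h2⟩
  have hcard := hp e he (part u)
  have hsub : ({u, v} : Finset V) ⊆ e.filter (fun w => part w = part u) := by
    intro w hw
    simp only [Finset.mem_insert, Finset.mem_singleton] at hw
    rcases hw with rfl | rfl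
    · exact Finset.mem_filter.2 ⟨h1, rfl⟩
    · exact Finset.mem_filter.2 ⟨h2, hpart.symm⟩
  have h2le : 2 ≤ (e.filter (fun w => part w = part u)).card := by
    calc 2 = ({u, v} : Finset V).card := (Finset.card_pair huv).symm
    _ ≤ _ := Finset.card_le_card hsub
  omega

private lemma edge_card (part : V → Fin 6) (E : Finset (Finset V))
    (hp : Partite 6 part E) {e : Finset V} (he : e ∈ E) : e.card = 6 := by
  rw [Finset.card_eq_sum_card_fiberwise (f := part) (t := Finset.univ) (fun x _ => Finset.mem_univ _)]
  simp [hp e he]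

private lemma exists_deg3_mem (part : V → Fin 6) (E : Finset (Finset V))
    (hp : Partite 6 part E) (hi : Intersecting E)
    (h8 : E.card = 8) (hτ : coverNum E = 4) (v0 : V) {e : Finset V} (he : e ∈ E) :
    ∃ v ∈ e, deg E v = 3 := by
  by_contra h
  push_neg at h
  have hle : ∀ v ∈ e, deg E v ≤ 2 := by
    intro v hv
    have h3 := deg_le_three E hi h8 hτ v0 v
    have := h v hv
    omega
  have hsum : ∑ v ∈ e, deg E v = ∑ f ∈ E, (e.filter (fun v => v ∈ f)).card := by
    simp only [deg]
    exact dc1 e E (fun v f => v ∈ f)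
  have hee : (e.filter (fun v => v ∈ e)).card = 6 := by
    have heq : e.filter (fun v => v ∈ e) = e := by
      ext v; simp
    rw [heq]; exact edge_card part E hp he
  have hlow : ∀ f ∈ E.erase e, 1 ≤ (e.filter (fun v => v ∈ f)).card := by
    intro f hf
    obtain ⟨x, hx1, hx2⟩ := hi e he f (Finset.mem_of_mem_erase hf)
    exact Finset.card_pos.2 ⟨x, Finset.mem_filter.2 ⟨hx1, hx2⟩⟩
  have h13 : 13 ≤ ∑ f ∈ E, (e.filter (fun v => v ∈ f)).card := by
    rw [← Finset.add_sum_erase E _ he]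
    have h7 : (E.erase e).card = 7 := by rw [Finset.card_erase_of_mem he, h8]
    have := sum_ge_card (E.erase e) _ hlow
    omega
  have hup : ∑ v ∈ e, deg E v ≤ 12 := by
    calc ∑ v ∈ e, deg E v ≤ e.card • 2 := Finset.sum_le_card_nsmul e _ 2 hle
    _ = 12 := by rw [edge_card part E hp he]; rfl
  omega


private lemma case4 (E : Finset (Finset V)) (h8 : E.card = 8)
    (T : Finset V) (hT4 : T.card = 4)
    (hdegT : ∀ t ∈ T, (E.filter (fun e => t ∈ e)).card = 3)
    (hTedge : ∀ e ∈ E, ∃ t ∈ T, t ∈ e)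
    (hclique : ∀ t ∈ T, ∀ u ∈ T, t ≠ u → 1 ≤ (E.filter (fun e => t ∈ e ∧ u ∈ e)).card)
    (hpair1 : ∀ e ∈ E, ∀ f ∈ E, e ≠ f → (e ∩ f).card = 1) : False := by
  classical
  set N : V → V → ℕ := fun t u => (E.filter (fun e => t ∈ e ∧ u ∈ e)).card with hN
  have hN1 : ∀ t ∈ T, ∀ u ∈ T, t ≠ u → N t u ≤ 1 := by
    intro t ht u hu htu
    by_contra hgt
    push_neg at hgt
    obtain ⟨e, he, f, hf, hef⟩ := Finset.one_lt_card.1 hgt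
    have he' := Finset.mem_filter.1 he
    have hf' := Finset.mem_filter.1 hf
    have h2 : 2 ≤ (e ∩ f).card := by
      have hsub : ({t, u} : Finset V) ⊆ e ∩ f := by
        intro w hw
        simp only [Finset.mem_insert, Finset.mem_singleton] at hw
        rcases hw with rfl | rfl
        · exact Finset.mem_inter.2 ⟨he'.2.1, hf'.2.1⟩
        · exact Finset.mem_inter.2 ⟨he'.2.2, hf'.2.2⟩
      calc 2 = ({t, u} : Finset V).card := (Finset.card_pair htu).symm
      _ ≤ _ := Finset.card_le_card hsub
    have := hpair1 e he'.1 f hf'.1 hef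
    omega
  have hNeq : ∀ t ∈ T, ∀ u ∈ T, t ≠ u → N t u = 1 := by
    intro t ht u hu htu
    have ha : 1 ≤ N t u := hclique t ht u hu htu
    have hb := hN1 t ht u hu htu
    omega
  set k : Finset V → ℕ := fun e => (T.filter (fun t => t ∈ e)).card with hk
  have hksum : ∑ e ∈ E, k e = 12 := by
    rw [hk]
    rw [dc1 E T (fun e t => t ∈ e)]
    rw [Finset.sum_congr rfl hdegT]
    rw [Finset.sum_const, hT4]
    rfl
  have hNtt : ∀ t ∈ T, N t t = 3 := by
    intro t ht
    have heq : E.filter (fun e => t ∈ e ∧ t ∈ e) = E.filter (fun e => t ∈ e) := by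
      apply Finset.filter_congr
      intro e _
      simp
    rw [hN]
    simp only [heq]
    exact hdegT t ht
  have hksq : ∑ e ∈ E, k e * k e = 24 := by
    rw [hk]
    rw [dc2 E T T (fun e t => t ∈ e)]
    have hinner : ∀ t ∈ T, ∑ u ∈ T, N t u = 6 := by
      intro t ht
      rw [← Finset.add_sum_erase T _ ht, hNtt t ht]
      have herase : ∑ u ∈ T.erase t, N t u = 3 := by
        rw [Finset.sum_congr rfl (fun u hu => hNeq t ht u (Finset.mem_of_mem_erase hu)
          (fun h => (Finset.mem_erase.1 hu).1 h.symm))]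
        rw [Finset.sum_const, Finset.card_erase_of_mem ht, hT4]
        rfl
      omega
    rw [Finset.sum_congr rfl hinner, Finset.sum_const, hT4]
    rfl
  have hk_ge : ∀ e ∈ E, 1 ≤ k e := by
    intro e he
    obtain ⟨t, ht, hte⟩ := hTedge e he
    exact Finset.card_pos.2 ⟨t, Finset.mem_filter.2 ⟨ht, hte⟩⟩
  have hk_le : ∀ e ∈ E, k e ≤ 4 := by
    intro e he
    calc k e ≤ T.card := Finset.card_le_card (Finset.filter_subset _ _)
    _ = 4 := hT4
  -- fiberwise counts
  set n : ℕ → ℕ := fun j => (E.filter (fun e => k e = j)).card with hn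
  have hmaps : ∀ e ∈ E, k e ∈ Finset.range 5 := by
    intro e he
    rw [Finset.mem_range]
    have := hk_le e he
    omega
  have hcards : ∑ j ∈ Finset.range 5, n j = 8 := by
    rw [hn]
    rw [← Finset.card_eq_sum_card_fiberwise hmaps, h8]
  have hfib1 : ∑ j ∈ Finset.range 5, (n j) * j = 12 := by
    have h := Finset.sum_fiberwise_of_maps_to hmaps k
    rw [← hksum, ← h]
    refine Finset.sum_congr rfl fun j _ => ?_
    rw [Finset.sum_congr rfl (fun e he => (Finset.mem_filter.1 he).2), Finset.sum_const,
      smul_eq_mul, hn]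
  have hfib2 : ∑ j ∈ Finset.range 5, (n j) * (j * j) = 24 := by
    have h := Finset.sum_fiberwise_of_maps_to hmaps (fun e => k e * k e)
    rw [← hksq, ← h]
    refine Finset.sum_congr rfl fun j _ => ?_
    rw [Finset.sum_congr rfl (fun e he => by rw [(Finset.mem_filter.1 he).2]),
      Finset.sum_const, smul_eq_mul, hn]
  have hn0 : n 0 = 0 := by
    rw [hn, Finset.card_eq_zero]
    rw [Finset.filter_eq_empty_iff]
    intro e he hk0
    have := hk_ge e he
    omega
  have hn3 : n 3 = 2 := by
    simp only [Finset.sum_range_succ, Finset.sum_range_zero] at hcards hfib1 hfib2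
    omega
  -- extract two edges with k = 3
  obtain ⟨e, he, f, hf, hef⟩ := Finset.one_lt_card.1 (show 1 < n 3 by omega)
  have he' := Finset.mem_filter.1 he
  have hf' := Finset.mem_filter.1 hf
  set A := T.filter (fun t => t ∈ e) with hA
  set B := T.filter (fun t => t ∈ f) with hB
  have hAB : 2 ≤ (A ∩ B).card := by
    have hu : A ∪ B ⊆ T := Finset.union_subset (Finset.filter_subset _ _) (Finset.filter_subset _ _)
    have h1 := Finset.card_inter_add_card_union A B
    have h2 := Finset.card_le_card hu
    have hAc : A.card = 3 := he'.2
    have hBc : B.card = 3 := hf'.2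
    omega
  obtain ⟨t, ht, u, hu, htu⟩ := Finset.one_lt_card.1 (by omega : 1 < (A ∩ B).card)
  have ht' := Finset.mem_inter.1 ht
  have hu' := Finset.mem_inter.1 hu
  have htT := (Finset.mem_filter.1 ht'.1).1
  have huT := (Finset.mem_filter.1 hu'.1).1
  have hN2 : 2 ≤ N t u := by
    have hsub : ({e, f} : Finset (Finset V)) ⊆ E.filter (fun g => t ∈ g ∧ u ∈ g) := by
      intro g hg
      simp only [Finset.mem_insert, Finset.mem_singleton] at hg
      rcases hg with rfl | rfl
      · exact Finset.mem_filter.2 ⟨he'.1, (Finset.mem_filter.1 ht'.1).2,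
          (Finset.mem_filter.1 hu'.1).2⟩
      · exact Finset.mem_filter.2 ⟨hf'.1, (Finset.mem_filter.1 ht'.2).2,
          (Finset.mem_filter.1 hu'.2).2⟩
    calc 2 = ({e, f} : Finset (Finset V)).card := (Finset.card_pair hef).symm
    _ ≤ _ := Finset.card_le_card hsub
  have := hN1 t htT u huT htu
  omega


private lemma case5A (E : Finset (Finset V)) (h8 : E.card = 8)
    (T : Finset V) (hT5 : T.card = 5)
    (hdegT : ∀ t ∈ T, (E.filter (fun e => t ∈ e)).card = 3)
    (hTedge : ∀ e ∈ E, ∃ t ∈ T, t ∈ e)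
    (hNeq : ∀ t ∈ T, ∀ u ∈ T, t ≠ u → (E.filter (fun e => t ∈ e ∧ u ∈ e)).card = 1) :
    False := by
  classical
  set k : Finset V → ℕ := fun e => (T.filter (fun t => t ∈ e)).card with hk
  have hksum : ∑ e ∈ E, k e = 15 := by
    rw [hk, dc1 E T (fun e t => t ∈ e), Finset.sum_congr rfl hdegT, Finset.sum_const, hT5]
    rfl
  have hNtt : ∀ t ∈ T, (E.filter (fun e => t ∈ e ∧ t ∈ e)).card = 3 := by
    intro t ht
    have heq : E.filter (fun e => t ∈ e ∧ t ∈ e) = E.filter (fun e => t ∈ e) := by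
      apply Finset.filter_congr
      intro e _
      simp
    rw [heq]
    exact hdegT t ht
  have hksq : ∑ e ∈ E, k e * k e = 35 := by
    rw [hk, dc2 E T T (fun e t => t ∈ e)]
    have hinner : ∀ t ∈ T, ∑ u ∈ T, (E.filter (fun e => t ∈ e ∧ u ∈ e)).card = 7 := by
      intro t ht
      rw [← Finset.add_sum_erase T _ ht, hNtt t ht]
      have herase : ∑ u ∈ T.erase t, (E.filter (fun e => t ∈ e ∧ u ∈ e)).card = 4 := by
        rw [Finset.sum_congr rfl (fun u hu => hNeq t ht u (Finset.mem_of_mem_erase hu)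
          (fun h => (Finset.mem_erase.1 hu).1 h.symm))]
        rw [Finset.sum_const, Finset.card_erase_of_mem ht, hT5]
        rfl
      omega
    rw [Finset.sum_congr rfl hinner, Finset.sum_const, hT5]
    rfl
  have hk_ge : ∀ e ∈ E, 1 ≤ k e := by
    intro e he
    obtain ⟨t, ht, hte⟩ := hTedge e he
    exact Finset.card_pos.2 ⟨t, Finset.mem_filter.2 ⟨ht, hte⟩⟩
  have hk_le : ∀ e ∈ E, k e ≤ 5 := by
    intro e he
    calc k e ≤ T.card := Finset.card_le_card (Finset.filter_subset _ _)
    _ = 5 := hT5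
  set n : ℕ → ℕ := fun j => (E.filter (fun e => k e = j)).card with hn
  have hmaps : ∀ e ∈ E, k e ∈ Finset.range 6 := by
    intro e he
    rw [Finset.mem_range]
    have := hk_le e he
    omega
  have hcards : ∑ j ∈ Finset.range 6, n j = 8 := by
    rw [hn, ← Finset.card_eq_sum_card_fiberwise hmaps, h8]
  have hfib1 : ∑ j ∈ Finset.range 6, (n j) * j = 15 := by
    have h := Finset.sum_fiberwise_of_maps_to hmaps k
    rw [← hksum, ← h]
    refine Finset.sum_congr rfl fun j _ => ?_
    rw [Finset.sum_congr rfl (fun e he => (Finset.mem_filter.1 he).2), Finset.sum_const,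
      smul_eq_mul, hn]
  have hfib2 : ∑ j ∈ Finset.range 6, (n j) * (j * j) = 35 := by
    have h := Finset.sum_fiberwise_of_maps_to hmaps (fun e => k e * k e)
    rw [← hksq, ← h]
    refine Finset.sum_congr rfl fun j _ => ?_
    rw [Finset.sum_congr rfl (fun e he => by rw [(Finset.mem_filter.1 he).2]),
      Finset.sum_const, smul_eq_mul, hn]
  have hn0 : n 0 = 0 := by
    rw [hn, Finset.card_eq_zero, Finset.filter_eq_empty_iff]
    intro e he hk0
    have := hk_ge e he
    omega
  simp only [Finset.sum_range_succ, Finset.sum_range_zero] at hcards hfib1 hfib2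
  have hn5 : n 5 = 0 := by omega
  have hn4 : n 4 = 0 ∨ n 4 = 1 := by omega
  rcases hn4 with hn4 | hn4
  · -- P2 : n3 = 3, n2 = 1, n1 = 4
    have hn3 : n 3 = 3 := by omega
    obtain ⟨R1, R2, R3, h12, h13, h23, hset⟩ := Finset.card_eq_three.1 (show
      (E.filter (fun e => k e = 3)).card = 3 from hn3)
    have hmem : ∀ g ∈ ({R1, R2, R3} : Finset (Finset V)), g ∈ E ∧ k g = 3 := by
      intro g hg
      rw [← hset] at hg
      exact ⟨(Finset.mem_filter.1 hg).1, (Finset.mem_filter.1 hg).2⟩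
    have hR1 := hmem R1 (by simp)
    have hR2 := hmem R2 (by simp)
    have hR3 := hmem R3 (by simp)
    have hpairb : ∀ Ra Rb : Finset V, Ra ∈ E → Rb ∈ E → Ra ≠ Rb →
        ((T.filter (fun t => t ∈ Ra)) ∩ (T.filter (fun t => t ∈ Rb))).card ≤ 1 := by
      intro Ra Rb ha hb hab
      by_contra hgt
      push_neg at hgt
      obtain ⟨t, ht, u, hu, htu⟩ := Finset.one_lt_card.1 hgt
      have ht' := Finset.mem_inter.1 ht
      have hu' := Finset.mem_inter.1 hu
      have htT := (Finset.mem_filter.1 ht'.1).1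
      have huT := (Finset.mem_filter.1 hu'.1).1
      have hsub : ({Ra, Rb} : Finset (Finset V)) ⊆ E.filter (fun g => t ∈ g ∧ u ∈ g) := by
        intro g hg
        simp only [Finset.mem_insert, Finset.mem_singleton] at hg
        rcases hg with rfl | rfl
        · exact Finset.mem_filter.2 ⟨ha, (Finset.mem_filter.1 ht'.1).2,
            (Finset.mem_filter.1 hu'.1).2⟩
        · exact Finset.mem_filter.2 ⟨hb, (Finset.mem_filter.1 ht'.2).2,
            (Finset.mem_filter.1 hu'.2).2⟩
      have h2 : 2 ≤ (E.filter (fun g => t ∈ g ∧ u ∈ g)).card := by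
        calc 2 = ({Ra, Rb} : Finset (Finset V)).card := (Finset.card_pair hab).symm
        _ ≤ _ := Finset.card_le_card hsub
      have := hNeq t htT u huT htu
      omega
    set A1 := T.filter (fun t => t ∈ R1) with hA1
    set A2 := T.filter (fun t => t ∈ R2) with hA2
    set A3 := T.filter (fun t => t ∈ R3) with hA3
    have hA1c : A1.card = 3 := hR1.2
    have hA2c : A2.card = 3 := hR2.2
    have hA3c : A3.card = 3 := hR3.2
    have h12' : (A1 ∩ A2).card ≤ 1 := hpairb R1 R2 hR1.1 hR2.1 h12
    have hsub12 : A1 ∪ A2 ⊆ T :=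
      Finset.union_subset (Finset.filter_subset _ _) (Finset.filter_subset _ _)
    have hcic := Finset.card_inter_add_card_union A1 A2
    have hle12 := Finset.card_le_card hsub12
    have hunion : A1 ∪ A2 = T := Finset.eq_of_subset_of_card_le hsub12 (by omega)
    have hA3sub : A3 ⊆ (A3 ∩ A1) ∪ (A3 ∩ A2) := by
      intro t ht
      have htT : t ∈ T := Finset.filter_subset _ _ ht
      rw [← hunion] at htT
      rcases Finset.mem_union.1 htT with h | h
      · exact Finset.mem_union_left _ (Finset.mem_inter.2 ⟨ht, h⟩)
      · exact Finset.mem_union_right _ (Finset.mem_inter.2 ⟨ht, h⟩)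
    have h31 : (A3 ∩ A1).card ≤ 1 := hpairb R3 R1 hR3.1 hR1.1 (Ne.symm h13)
    have h32 : (A3 ∩ A2).card ≤ 1 := hpairb R3 R2 hR3.1 hR2.1 (Ne.symm h23)
    have : A3.card ≤ 2 := by
      calc A3.card ≤ ((A3 ∩ A1) ∪ (A3 ∩ A2)).card := Finset.card_le_card hA3sub
      _ ≤ (A3 ∩ A1).card + (A3 ∩ A2).card := Finset.card_union_le _ _
      _ ≤ 2 := by omega
    omega
  · -- P1 : n4 = 1, n3 = 0, n2 = 4, n1 = 3
    have hn3 : n 3 = 0 := by omega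
    obtain ⟨Q, hQ⟩ := Finset.card_eq_one.1 (show (E.filter (fun e => k e = 4)).card = 1 from hn4)
    have hQmem : Q ∈ E.filter (fun e => k e = 4) := by rw [hQ]; exact Finset.mem_singleton_self Q
    have hQE : Q ∈ E := (Finset.mem_filter.1 hQmem).1
    have hkQ : k Q = 4 := (Finset.mem_filter.1 hQmem).2
    have hxex : 0 < (T \ T.filter (fun t => t ∈ Q)).card := by
      rw [Finset.card_sdiff_of_subset (Finset.filter_subset _ _), hT5]
      have : (T.filter (fun t => t ∈ Q)).card = 4 := hkQ
      omega
    obtain ⟨x, hx⟩ := Finset.card_pos.1 hxex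
    have hxT : x ∈ T := (Finset.mem_sdiff.1 hx).1
    have hxQ : x ∉ Q := by
      intro hxq
      exact (Finset.mem_sdiff.1 hx).2 (Finset.mem_filter.2 ⟨hxT, hxq⟩)
    have hch : ∀ y ∈ T.erase x, ∃ e ∈ E.filter (fun e => x ∈ e), y ∈ e := by
      intro y hy
      have hyT := Finset.mem_of_mem_erase hy
      have hyx : x ≠ y := fun h => (Finset.mem_erase.1 hy).1 h.symm
      have h1 := hNeq x hxT y hyT hyx
      have hpos : 0 < (E.filter (fun e => x ∈ e ∧ y ∈ e)).card := by omega
      obtain ⟨e, he⟩ := Finset.card_pos.1 hpos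
      have he' := Finset.mem_filter.1 he
      exact ⟨e, Finset.mem_filter.2 ⟨he'.1, he'.2.1⟩, he'.2.2⟩
    choose! g hg1 hg2 using hch
    have hcard_lt : (E.filter (fun e => x ∈ e)).card < (T.erase x).card := by
      rw [Finset.card_erase_of_mem hxT, hT5, hdegT x hxT]
      norm_num
    obtain ⟨y, hy, z, hz, hyz, hgyz⟩ := Finset.exists_ne_map_eq_of_card_lt_of_maps_to hcard_lt hg1
    set e := g y with he_def
    have heE : e ∈ E := (Finset.mem_filter.1 (hg1 y hy)).1
    have hxe : x ∈ e := (Finset.mem_filter.1 (hg1 y hy)).2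
    have hye : y ∈ e := hg2 y hy
    have hze : z ∈ e := by rw [hgyz]; exact hg2 z hz
    have hyx : y ≠ x := (Finset.mem_erase.1 hy).1
    have hzx : z ≠ x := (Finset.mem_erase.1 hz).1
    have hsub3 : ({x, y, z} : Finset V) ⊆ T.filter (fun t => t ∈ e) := by
      intro w hw
      simp only [Finset.mem_insert, Finset.mem_singleton] at hw
      rcases hw with rfl | rfl | rfl
      · exact Finset.mem_filter.2 ⟨hxT, hxe⟩
      · exact Finset.mem_filter.2 ⟨Finset.mem_of_mem_erase hy, hye⟩
      · exact Finset.mem_filter.2 ⟨Finset.mem_of_mem_erase hz, hze⟩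
    have hx_nm : x ∉ ({y, z} : Finset V) := by
      simp only [Finset.mem_insert, Finset.mem_singleton]
      push_neg
      exact ⟨hyx.symm, hzx.symm⟩
    have hy_nm : y ∉ ({z} : Finset V) := by
      simp only [Finset.mem_singleton]
      exact hyz
    have hc3 : ({x, y, z} : Finset V).card = 3 := by
      rw [Finset.card_insert_of_notMem hx_nm, Finset.card_insert_of_notMem hy_nm,
        Finset.card_singleton]
    have hke3 : 3 ≤ k e := by
      calc 3 = ({x, y, z} : Finset V).card := hc3.symm
      _ ≤ _ := Finset.card_le_card hsub3
    have hkeQ : e ≠ Q := fun h => hxQ (h ▸ hxe)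
    have hne3 : k e ≠ 3 := by
      intro h
      have : 0 < n 3 := Finset.card_pos.2 ⟨e, Finset.mem_filter.2 ⟨heE, h⟩⟩
      omega
    have hne4 : k e ≠ 4 := by
      intro h
      have : e ∈ E.filter (fun e => k e = 4) := Finset.mem_filter.2 ⟨heE, h⟩
      rw [hQ, Finset.mem_singleton] at this
      exact hkeQ this
    have hne5 : k e ≠ 5 := by
      intro h
      have : 0 < n 5 := Finset.card_pos.2 ⟨e, Finset.mem_filter.2 ⟨heE, h⟩⟩
      omega
    have := hk_le e heE
    omega


private lemma case5B (E : Finset (Finset V)) (h8 : E.card = 8)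
    (T : Finset V) (hT5 : T.card = 5)
    (hdegT : ∀ t ∈ T, (E.filter (fun e => t ∈ e)).card = 3)
    (hTedge : ∀ e ∈ E, ∃ t ∈ T, t ∈ e)
    (hclique : ∀ t ∈ T, ∀ u ∈ T, t ≠ u → 1 ≤ (E.filter (fun e => t ∈ e ∧ u ∈ e)).card)
    (e0 f0 : Finset V) (he0 : e0 ∈ E) (hf0 : f0 ∈ E) (hef0 : e0 ≠ f0)
    (hcef : (e0 ∩ f0).card = 2)
    (hpair : ∀ g ∈ E, ∀ h ∈ E, g ≠ h → ¬(g = e0 ∧ h = f0) → ¬(g = f0 ∧ h = e0) →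
      (g ∩ h).card = 1)
    (t0 u0 : V) (ht0 : t0 ∈ T) (hu0 : u0 ∈ T) (htu0 : t0 ≠ u0)
    (ht0e : t0 ∈ e0) (ht0f : t0 ∈ f0) (hu0e : u0 ∈ e0) (hu0f : u0 ∈ f0)
    (hw : ∀ Q ∈ E, ∃ w ∈ Q, w ∉ T ∧ (E.filter (fun e => w ∈ e)).card = 2) : False := by
  classical
  -- e0 ∩ f0 = {t0, u0}
  have hsub_tu : ({t0, u0} : Finset V) ⊆ e0 ∩ f0 := by
    intro v hv
    simp only [Finset.mem_insert, Finset.mem_singleton] at hv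
    rcases hv with rfl | rfl
    · exact Finset.mem_inter.2 ⟨ht0e, ht0f⟩
    · exact Finset.mem_inter.2 ⟨hu0e, hu0f⟩
  have hef_eq : ({t0, u0} : Finset V) = e0 ∩ f0 :=
    Finset.eq_of_subset_of_card_le hsub_tu (by rw [hcef, Finset.card_pair htu0])
  -- N t0 u0 = 2
  have hN2 : (E.filter (fun e => t0 ∈ e ∧ u0 ∈ e)).card = 2 := by
    have hge : 2 ≤ (E.filter (fun e => t0 ∈ e ∧ u0 ∈ e)).card := by
      have hsub : ({e0, f0} : Finset (Finset V)) ⊆ E.filter (fun e => t0 ∈ e ∧ u0 ∈ e) := by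
        intro g hg
        simp only [Finset.mem_insert, Finset.mem_singleton] at hg
        rcases hg with rfl | rfl
        · exact Finset.mem_filter.2 ⟨he0, ht0e, hu0e⟩
        · exact Finset.mem_filter.2 ⟨hf0, ht0f, hu0f⟩
      calc 2 = ({e0, f0} : Finset (Finset V)).card := (Finset.card_pair hef0).symm
      _ ≤ _ := Finset.card_le_card hsub
    have hle : (E.filter (fun e => t0 ∈ e ∧ u0 ∈ e)).card ≤ 2 := by
      by_contra hgt
      push_neg at hgt
      obtain ⟨S', hS'sub, hS'card⟩ :=
        Finset.exists_subset_card_eq (s := (E.filter (fun e => t0 ∈ e ∧ u0 ∈ e))) (n := 3) (by omega)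
      obtain ⟨g1, g2, g3, h12, h13, h23, hset⟩ := Finset.card_eq_three.1 hS'card
      have hmem : ∀ g ∈ ({g1, g2, g3} : Finset (Finset V)), g ∈ E ∧ t0 ∈ g ∧ u0 ∈ g := by
        intro g hg
        rw [← hset] at hg
        have := Finset.mem_filter.1 (hS'sub hg)
        exact ⟨this.1, this.2⟩
      have hg1' := hmem g1 (Finset.mem_insert_self _ _)
      have hg2' := hmem g2 (Finset.mem_insert.2 (Or.inr (Finset.mem_insert_self _ _)))
      have hg3' := hmem g3 (Finset.mem_insert.2 (Or.inr (Finset.mem_insert.2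
        (Or.inr (Finset.mem_singleton_self _)))))
      have hdes : ∀ ga gb : Finset V, ga ∈ E → gb ∈ E → ga ≠ gb → t0 ∈ ga → u0 ∈ ga →
          t0 ∈ gb → u0 ∈ gb → (ga = e0 ∧ gb = f0) ∨ (ga = f0 ∧ gb = e0) := by
        intro ga gb hga hgb hab ht0a hu0a ht0b hu0b
        by_contra hcon
        have hcon1 := fun h => hcon (Or.inl h)
        have hcon2 := fun h => hcon (Or.inr h)
        have h1 := hpair ga hga gb hgb hab hcon1 hcon2
        have h2 : 2 ≤ (ga ∩ gb).card := by
          have hs : ({t0, u0} : Finset V) ⊆ ga ∩ gb := by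
            intro v hv
            simp only [Finset.mem_insert, Finset.mem_singleton] at hv
            rcases hv with rfl | rfl
            · exact Finset.mem_inter.2 ⟨ht0a, ht0b⟩
            · exact Finset.mem_inter.2 ⟨hu0a, hu0b⟩
          calc 2 = ({t0, u0} : Finset V).card := (Finset.card_pair htu0).symm
          _ ≤ _ := Finset.card_le_card hs
        omega
      have hd12 := hdes g1 g2 hg1'.1 hg2'.1 h12 hg1'.2.1 hg1'.2.2 hg2'.2.1 hg2'.2.2
      have hd13 := hdes g1 g3 hg1'.1 hg3'.1 h13 hg1'.2.1 hg1'.2.2 hg3'.2.1 hg3'.2.2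
      rcases hd12 with ⟨hq1, hq2⟩ | ⟨hq1, hq2⟩ <;> rcases hd13 with ⟨hr1, hr2⟩ | ⟨hr1, hr2⟩
      · exact h23 (hq2.trans hr2.symm)
      · exact hef0 (hq1.symm.trans hr1)
      · exact hef0 (hr1.symm.trans hq1)
      · exact h23 (hq2.trans hr2.symm)
    omega
  have hNother : ∀ t ∈ T, ∀ u ∈ T, t ≠ u → ¬(t = t0 ∧ u = u0) → ¬(t = u0 ∧ u = t0) →
      (E.filter (fun e => t ∈ e ∧ u ∈ e)).card = 1 := by
    intro t ht u hu htu hc1 hc2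
    have hge := hclique t ht u hu htu
    have hle : (E.filter (fun e => t ∈ e ∧ u ∈ e)).card ≤ 1 := by
      by_contra hgt
      push_neg at hgt
      obtain ⟨ga, hga, gb, hgb, hab⟩ := Finset.one_lt_card.1 hgt
      have hga' := Finset.mem_filter.1 hga
      have hgb' := Finset.mem_filter.1 hgb
      have h2 : 2 ≤ (ga ∩ gb).card := by
        have hs : ({t, u} : Finset V) ⊆ ga ∩ gb := by
          intro v hv
          simp only [Finset.mem_insert, Finset.mem_singleton] at hv
          rcases hv with rfl | rfl
          · exact Finset.mem_inter.2 ⟨hga'.2.1, hgb'.2.1⟩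
          · exact Finset.mem_inter.2 ⟨hga'.2.2, hgb'.2.2⟩
        calc 2 = ({t, u} : Finset V).card := (Finset.card_pair htu).symm
        _ ≤ _ := Finset.card_le_card hs
      have hdes : (ga = e0 ∧ gb = f0) ∨ (ga = f0 ∧ gb = e0) := by
        by_contra hcon
        have hcon1 := fun h => hcon (Or.inl h)
        have hcon2 := fun h => hcon (Or.inr h)
        have := hpair ga hga'.1 gb hgb'.1 hab hcon1 hcon2
        omega
      have htuef : t ∈ e0 ∩ f0 ∧ u ∈ e0 ∩ f0 := by
        rcases hdes with ⟨rfl, rfl⟩ | ⟨rfl, rfl⟩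
        · exact ⟨Finset.mem_inter.2 ⟨hga'.2.1, hgb'.2.1⟩, Finset.mem_inter.2 ⟨hga'.2.2, hgb'.2.2⟩⟩
        · exact ⟨Finset.mem_inter.2 ⟨hgb'.2.1, hga'.2.1⟩, Finset.mem_inter.2 ⟨hgb'.2.2, hga'.2.2⟩⟩
      rw [← hef_eq] at htuef
      simp only [Finset.mem_insert, Finset.mem_singleton] at htuef
      rcases htuef.1 with rfl | rfl
      · rcases htuef.2 with rfl | rfl
        · exact htu rfl
        · exact hc1 ⟨rfl, rfl⟩
      · rcases htuef.2 with rfl | rfl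
        · exact hc2 ⟨rfl, rfl⟩
        · exact htu rfl
    omega
  -- k machinery
  set k : Finset V → ℕ := fun e => (T.filter (fun t => t ∈ e)).card with hk
  have hksum : ∑ e ∈ E, k e = 15 := by
    rw [hk, dc1 E T (fun e t => t ∈ e), Finset.sum_congr rfl hdegT, Finset.sum_const, hT5]
    rfl
  have hNtt : ∀ t ∈ T, (E.filter (fun e => t ∈ e ∧ t ∈ e)).card = 3 := by
    intro t ht
    have heq : E.filter (fun e => t ∈ e ∧ t ∈ e) = E.filter (fun e => t ∈ e) := by
      apply Finset.filter_congr
      intro e _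
      simp
    rw [heq]
    exact hdegT t ht
  have hNsymm : (E.filter (fun e => u0 ∈ e ∧ t0 ∈ e)).card = 2 := by
    rw [← hN2]
    congr 1
    apply Finset.filter_congr
    intro e _
    exact and_comm
  have hu0e' : u0 ∈ T.erase t0 := Finset.mem_erase.2 ⟨Ne.symm htu0, hu0⟩
  have ht0e' : t0 ∈ T.erase u0 := Finset.mem_erase.2 ⟨htu0, ht0⟩
  have hFother : ∀ t ∈ T, t ≠ t0 → t ≠ u0 →
      (∑ u ∈ T, (E.filter (fun e => t ∈ e ∧ u ∈ e)).card) = 7 := by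
    intro t ht htt0 htu0'
    rw [← Finset.add_sum_erase T _ ht, hNtt t ht]
    have hones : ∀ u ∈ T.erase t, (E.filter (fun e => t ∈ e ∧ u ∈ e)).card = 1 := by
      intro u hu
      refine hNother t ht u (Finset.mem_of_mem_erase hu)
        (fun h => (Finset.mem_erase.1 hu).1 h.symm) ?_ ?_
      · rintro ⟨rfl, -⟩
        exact htt0 rfl
      · rintro ⟨rfl, -⟩
        exact htu0' rfl
    rw [Finset.sum_congr rfl hones, Finset.sum_const, Finset.card_erase_of_mem ht, hT5,
      smul_eq_mul]
  have hFt0 : (∑ u ∈ T, (E.filter (fun e => t0 ∈ e ∧ u ∈ e)).card) = 8 := by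
    rw [← Finset.add_sum_erase T _ ht0, hNtt t0 ht0,
      ← Finset.add_sum_erase (T.erase t0) _ hu0e', hN2]
    have hones : ∀ u ∈ (T.erase t0).erase u0,
        (E.filter (fun e => t0 ∈ e ∧ u ∈ e)).card = 1 := by
      intro u hu
      have hu1 := Finset.mem_erase.1 hu
      have hu2 := Finset.mem_erase.1 hu1.2
      refine hNother t0 ht0 u (Finset.mem_of_mem_erase hu1.2) (fun h => hu2.1 h.symm) ?_ ?_
      · rintro ⟨-, rfl⟩
        exact hu1.1 rfl
      · rintro ⟨h, -⟩
        exact htu0 h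
    rw [Finset.sum_congr rfl hones, Finset.sum_const, Finset.card_erase_of_mem hu0e',
      Finset.card_erase_of_mem ht0, hT5, smul_eq_mul]
    norm_num
  have hFu0 : (∑ u ∈ T, (E.filter (fun e => u0 ∈ e ∧ u ∈ e)).card) = 8 := by
    rw [← Finset.add_sum_erase T _ hu0, hNtt u0 hu0,
      ← Finset.add_sum_erase (T.erase u0) _ ht0e', hNsymm]
    have hones : ∀ u ∈ (T.erase u0).erase t0,
        (E.filter (fun e => u0 ∈ e ∧ u ∈ e)).card = 1 := by
      intro u hu
      have hu1 := Finset.mem_erase.1 hu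
      have hu2 := Finset.mem_erase.1 hu1.2
      refine hNother u0 hu0 u (Finset.mem_of_mem_erase hu1.2) (fun h => hu2.1 h.symm) ?_ ?_
      · rintro ⟨h, -⟩
        exact htu0 h.symm
      · rintro ⟨-, rfl⟩
        exact hu1.1 rfl
    rw [Finset.sum_congr rfl hones, Finset.sum_const, Finset.card_erase_of_mem ht0e',
      Finset.card_erase_of_mem hu0, hT5, smul_eq_mul]
    norm_num
  have hksq : ∑ e ∈ E, k e * k e = 37 := by
    rw [hk, dc2 E T T (fun e t => t ∈ e)]
    rw [← Finset.add_sum_erase T _ ht0, hFt0, ← Finset.add_sum_erase (T.erase t0) _ hu0e', hFu0]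
    have hones : ∀ t ∈ (T.erase t0).erase u0,
        (∑ u ∈ T, (E.filter (fun e => t ∈ e ∧ u ∈ e)).card) = 7 := by
      intro t ht
      have ht1 := Finset.mem_erase.1 ht
      have ht2 := Finset.mem_erase.1 ht1.2
      exact hFother t (Finset.mem_of_mem_erase ht1.2) ht2.1 ht1.1
    rw [Finset.sum_congr rfl hones, Finset.sum_const, Finset.card_erase_of_mem hu0e',
      Finset.card_erase_of_mem ht0, hT5, smul_eq_mul]
    norm_num
  have hk_ge : ∀ e ∈ E, 1 ≤ k e := by
    intro e he
    obtain ⟨t, ht, hte⟩ := hTedge e he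
    exact Finset.card_pos.2 ⟨t, Finset.mem_filter.2 ⟨ht, hte⟩⟩
  have hk_le : ∀ e ∈ E, k e ≤ 5 := by
    intro e he
    calc k e ≤ T.card := Finset.card_le_card (Finset.filter_subset _ _)
    _ = 5 := hT5
  set n : ℕ → ℕ := fun j => (E.filter (fun e => k e = j)).card with hn
  have hmaps : ∀ e ∈ E, k e ∈ Finset.range 6 := by
    intro e he
    rw [Finset.mem_range]
    have := hk_le e he
    omega
  have hcards : ∑ j ∈ Finset.range 6, n j = 8 := by
    rw [hn, ← Finset.card_eq_sum_card_fiberwise hmaps, h8]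
  have hfib1 : ∑ j ∈ Finset.range 6, (n j) * j = 15 := by
    have h := Finset.sum_fiberwise_of_maps_to hmaps k
    rw [← hksum, ← h]
    refine Finset.sum_congr rfl fun j _ => ?_
    rw [Finset.sum_congr rfl (fun e he => (Finset.mem_filter.1 he).2), Finset.sum_const,
      smul_eq_mul, hn]
  have hfib2 : ∑ j ∈ Finset.range 6, (n j) * (j * j) = 37 := by
    have h := Finset.sum_fiberwise_of_maps_to hmaps (fun e => k e * k e)
    rw [← hksq, ← h]
    refine Finset.sum_congr rfl fun j _ => ?_
    rw [Finset.sum_congr rfl (fun e he => by rw [(Finset.mem_filter.1 he).2]),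
      Finset.sum_const, smul_eq_mul, hn]
  have hn0 : n 0 = 0 := by
    rw [hn, Finset.card_eq_zero, Finset.filter_eq_empty_iff]
    intro e he hk0
    have := hk_ge e he
    omega
  simp only [Finset.sum_range_succ, Finset.sum_range_zero] at hcards hfib1 hfib2
  have hn5 : n 5 = 0 := by omega
  have hn4 : n 4 = 1 := by omega
  have hn3 : n 3 = 1 := by omega
  -- extract Q and R
  obtain ⟨Q, hQ⟩ := Finset.card_eq_one.1 (show (E.filter (fun e => k e = 4)).card = 1 from hn4)
  obtain ⟨R, hR⟩ := Finset.card_eq_one.1 (show (E.filter (fun e => k e = 3)).card = 1 from hn3)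
  have hQmem : Q ∈ E.filter (fun e => k e = 4) := by rw [hQ]; exact Finset.mem_singleton_self Q
  have hRmem : R ∈ E.filter (fun e => k e = 3) := by rw [hR]; exact Finset.mem_singleton_self R
  have hQE : Q ∈ E := (Finset.mem_filter.1 hQmem).1
  have hRE : R ∈ E := (Finset.mem_filter.1 hRmem).1
  have hkQ : k Q = 4 := (Finset.mem_filter.1 hQmem).2
  have hkR : k R = 3 := (Finset.mem_filter.1 hRmem).2
  have hQneR : Q ≠ R := by
    intro h
    rw [h, hkR] at hkQ
    omega
  -- x : the element of T not in Q
  have hxex : 0 < (T \ T.filter (fun t => t ∈ Q)).card := by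
    rw [Finset.card_sdiff_of_subset (Finset.filter_subset _ _), hT5]
    have : (T.filter (fun t => t ∈ Q)).card = 4 := hkQ
    omega
  obtain ⟨x, hx⟩ := Finset.card_pos.1 hxex
  have hxT : x ∈ T := (Finset.mem_sdiff.1 hx).1
  have hxQ : x ∉ Q := by
    intro hxq
    exact (Finset.mem_sdiff.1 hx).2 (Finset.mem_filter.2 ⟨hxT, hxq⟩)
  have hKQ : T.filter (fun t => t ∈ Q) = T.erase x := by
    apply Finset.eq_of_subset_of_card_le
    · intro t ht
      have ht' := Finset.mem_filter.1 ht
      exact Finset.mem_erase.2 ⟨fun h => hxQ (h ▸ ht'.2), ht'.1⟩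
    · rw [Finset.card_erase_of_mem hxT, hT5]
      have : (T.filter (fun t => t ∈ Q)).card = 4 := hkQ
      omega
  -- choice of common edges with x
  have hch : ∀ y ∈ T.erase x, ∃ e ∈ E.filter (fun e => x ∈ e), y ∈ e := by
    intro y hy
    have hyT := Finset.mem_of_mem_erase hy
    have hyx : x ≠ y := fun h => (Finset.mem_erase.1 hy).1 h.symm
    have h1 := hclique x hxT y hyT hyx
    have hpos : 0 < (E.filter (fun e => x ∈ e ∧ y ∈ e)).card := by omega
    obtain ⟨e, he⟩ := Finset.card_pos.1 hpos
    have he' := Finset.mem_filter.1 he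
    exact ⟨e, Finset.mem_filter.2 ⟨he'.1, he'.2.1⟩, he'.2.2⟩
  choose! g hg1 hg2 using hch
  have hgE : ∀ y ∈ T.erase x, g y ∈ E := fun y hy => (Finset.mem_filter.1 (hg1 y hy)).1
  have hgx : ∀ y ∈ T.erase x, x ∈ g y := fun y hy => (Finset.mem_filter.1 (hg1 y hy)).2
  -- pigeonhole forces x ∈ R
  have hxR : x ∈ R := by
    have hcard_lt : (E.filter (fun e => x ∈ e)).card < (T.erase x).card := by
      rw [Finset.card_erase_of_mem hxT, hT5, hdegT x hxT]
      norm_num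
    obtain ⟨y, hy, z, hz, hyz, hgyz⟩ :=
      Finset.exists_ne_map_eq_of_card_lt_of_maps_to hcard_lt hg1
    have heE : g y ∈ E := hgE y hy
    have hxe : x ∈ g y := hgx y hy
    have hye : y ∈ g y := hg2 y hy
    have hze : z ∈ g y := by rw [hgyz]; exact hg2 z hz
    have hyT : y ∈ T := Finset.mem_of_mem_erase hy
    have hzT : z ∈ T := Finset.mem_of_mem_erase hz
    have hsub3 : ({x, y, z} : Finset V) ⊆ T.filter (fun t => t ∈ g y) := by
      intro v hv
      simp only [Finset.mem_insert, Finset.mem_singleton] at hv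
      rcases hv with rfl | rfl | rfl
      · exact Finset.mem_filter.2 ⟨hxT, hxe⟩
      · exact Finset.mem_filter.2 ⟨hyT, hye⟩
      · exact Finset.mem_filter.2 ⟨hzT, hze⟩
    have hyx : y ≠ x := (Finset.mem_erase.1 hy).1
    have hzx : z ≠ x := (Finset.mem_erase.1 hz).1
    have hx_nm : x ∉ ({y, z} : Finset V) := by
      simp only [Finset.mem_insert, Finset.mem_singleton]
      push_neg
      exact ⟨hyx.symm, hzx.symm⟩
    have hy_nm : y ∉ ({z} : Finset V) := by
      simp only [Finset.mem_singleton]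
      exact hyz
    have hc3 : ({x, y, z} : Finset V).card = 3 := by
      rw [Finset.card_insert_of_notMem hx_nm, Finset.card_insert_of_notMem hy_nm,
        Finset.card_singleton]
    have hke3 : 3 ≤ k (g y) := by
      calc 3 = ({x, y, z} : Finset V).card := hc3.symm
      _ ≤ _ := Finset.card_le_card hsub3
    have hkeQ : g y ≠ Q := fun h => hxQ (h ▸ hgx y hy)
    have hne4 : k (g y) ≠ 4 := by
      intro h
      have : g y ∈ E.filter (fun e => k e = 4) := Finset.mem_filter.2 ⟨heE, h⟩
      rw [hQ, Finset.mem_singleton] at this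
      exact hkeQ this
    have hne5 : k (g y) ≠ 5 := by
      intro h
      have hmem5 : g y ∈ E.filter (fun e => k e = 5) := Finset.mem_filter.2 ⟨heE, h⟩
      have : 0 < n 5 := Finset.card_pos.2 ⟨g y, hmem5⟩
      omega
    have hk3 : k (g y) = 3 := by
      have := hk_le (g y) heE
      omega
    have : g y ∈ E.filter (fun e => k e = 3) := Finset.mem_filter.2 ⟨heE, hk3⟩
    rw [hR, Finset.mem_singleton] at this
    rw [← this]
    exact hgx y hy
  -- A_R and the two-element sets
  have hARx : x ∈ T.filter (fun t => t ∈ R) := Finset.mem_filter.2 ⟨hxT, hxR⟩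
  have hARcard : (T.filter (fun t => t ∈ R)).card = 3 := hkR
  have hCDcard : ((T.filter (fun t => t ∈ R)).erase x).card = 2 := by
    rw [Finset.card_erase_of_mem hARx, hARcard]
  obtain ⟨c, d, hcd, hCD⟩ := Finset.card_eq_two.1 hCDcard
  have hcmem : c ∈ (T.filter (fun t => t ∈ R)).erase x := by rw [hCD]; simp
  have hdmem : d ∈ (T.filter (fun t => t ∈ R)).erase x := by rw [hCD]; simp
  have hcT : c ∈ T := (Finset.mem_filter.1 (Finset.mem_of_mem_erase hcmem)).1
  have hdT : d ∈ T := (Finset.mem_filter.1 (Finset.mem_of_mem_erase hdmem)).1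
  have hcR : c ∈ R := (Finset.mem_filter.1 (Finset.mem_of_mem_erase hcmem)).2
  have hdR : d ∈ R := (Finset.mem_filter.1 (Finset.mem_of_mem_erase hdmem)).2
  have hcx : c ≠ x := (Finset.mem_erase.1 hcmem).1
  have hdx : d ≠ x := (Finset.mem_erase.1 hdmem).1
  have hcQ : c ∈ Q := by
    have : c ∈ T.erase x := Finset.mem_erase.2 ⟨hcx, hcT⟩
    rw [← hKQ] at this
    exact (Finset.mem_filter.1 this).2
  have hdQ : d ∈ Q := by
    have : d ∈ T.erase x := Finset.mem_erase.2 ⟨hdx, hdT⟩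
    rw [← hKQ] at this
    exact (Finset.mem_filter.1 this).2
  -- Q, R is the designated pair
  have hQR2 : 2 ≤ (Q ∩ R).card := by
    have hs : ({c, d} : Finset V) ⊆ Q ∩ R := by
      intro v hv
      simp only [Finset.mem_insert, Finset.mem_singleton] at hv
      rcases hv with rfl | rfl
      · exact Finset.mem_inter.2 ⟨hcQ, hcR⟩
      · exact Finset.mem_inter.2 ⟨hdQ, hdR⟩
    calc 2 = ({c, d} : Finset V).card := (Finset.card_pair hcd).symm
    _ ≤ _ := Finset.card_le_card hs
  have hdes : (Q = e0 ∧ R = f0) ∨ (Q = f0 ∧ R = e0) := by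
    by_contra hcon
    have hcon1 := fun h => hcon (Or.inl h)
    have hcon2 := fun h => hcon (Or.inr h)
    have := hpair Q hQE R hRE hQneR hcon1 hcon2
    omega
  have hQRcard : (Q ∩ R).card = 2 := by
    rcases hdes with ⟨hq, hr⟩ | ⟨hq, hr⟩
    · rw [hq, hr]; exact hcef
    · rw [hq, hr, Finset.inter_comm]; exact hcef
  have hQRset : ({c, d} : Finset V) = Q ∩ R := by
    apply Finset.eq_of_subset_of_card_le
    · intro v hv
      simp only [Finset.mem_insert, Finset.mem_singleton] at hv
      rcases hv with rfl | rfl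
      · exact Finset.mem_inter.2 ⟨hcQ, hcR⟩
      · exact Finset.mem_inter.2 ⟨hdQ, hdR⟩
    · rw [hQRcard, Finset.card_pair hcd]
  -- general: Q meets any other edge (except R) in exactly one vertex
  have hQf1 : ∀ fE ∈ E, fE ≠ Q → fE ≠ R → (Q ∩ fE).card = 1 := by
    intro fE hfE hfQ hfR
    apply hpair Q hQE fE hfE (Ne.symm hfQ)
    · rintro ⟨hq, hf⟩
      rcases hdes with ⟨hq2, hr2⟩ | ⟨hq2, hr2⟩
      · exact hfR (hf.trans hr2.symm)
      · exact hef0 (hq.symm.trans hq2)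
    · rintro ⟨hq, hf⟩
      rcases hdes with ⟨hq2, hr2⟩ | ⟨hq2, hr2⟩
      · exact hef0 (hq2.symm.trans hq)
      · exact hfR (hf.trans hr2.symm)
  -- the two k=2 edges through x : e_a and e_b
  have hWcard : ((T.erase x) \ (T.filter (fun t => t ∈ R))).card = 2 := by
    have hinter : (T.erase x) ∩ (T.filter (fun t => t ∈ R))
        = (T.filter (fun t => t ∈ R)).erase x := by
      ext v
      simp only [Finset.mem_inter, Finset.mem_erase, Finset.mem_filter]
      tauto
    have hsd := Finset.card_sdiff_add_card_inter (T.erase x) (T.filter (fun t => t ∈ R))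
    rw [hinter, hCDcard, Finset.card_erase_of_mem hxT, hT5] at hsd
    omega
  obtain ⟨a, b, hab, hW⟩ := Finset.card_eq_two.1 hWcard
  have hamem : a ∈ (T.erase x) \ (T.filter (fun t => t ∈ R)) := by rw [hW]; simp
  have hbmem : b ∈ (T.erase x) \ (T.filter (fun t => t ∈ R)) := by rw [hW]; simp
  have haTx : a ∈ T.erase x := (Finset.mem_sdiff.1 hamem).1
  have hbTx : b ∈ T.erase x := (Finset.mem_sdiff.1 hbmem).1
  have haT : a ∈ T := Finset.mem_of_mem_erase haTx
  have hbT : b ∈ T := Finset.mem_of_mem_erase hbTx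
  have haR : a ∉ R := fun h => (Finset.mem_sdiff.1 hamem).2 (Finset.mem_filter.2 ⟨haT, h⟩)
  have hbR : b ∉ R := fun h => (Finset.mem_sdiff.1 hbmem).2 (Finset.mem_filter.2 ⟨hbT, h⟩)
  have haQ : a ∈ Q := by
    rw [← hKQ] at haTx
    exact (Finset.mem_filter.1 haTx).2
  have hbQ : b ∈ Q := by
    rw [← hKQ] at hbTx
    exact (Finset.mem_filter.1 hbTx).2
  -- edges e_a := g a, e_b := g b
  have hkg : ∀ y, y ∈ ((T.erase x) \ (T.filter (fun t => t ∈ R))) →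
      g y ≠ Q ∧ g y ≠ R ∧ T.filter (fun t => t ∈ g y) = {x, y} := by
    intro y hy
    have hyTx : y ∈ T.erase x := (Finset.mem_sdiff.1 hy).1
    have hyT : y ∈ T := Finset.mem_of_mem_erase hyTx
    have hyR : y ∉ R := fun h => (Finset.mem_sdiff.1 hy).2 (Finset.mem_filter.2 ⟨hyT, h⟩)
    have hyx : y ≠ x := (Finset.mem_erase.1 hyTx).1
    have hgyE := hgE y hyTx
    have hgyQ : g y ≠ Q := fun h => hxQ (h ▸ hgx y hyTx)
    have hgyR : g y ≠ R := fun h => hyR (h ▸ hg2 y hyTx)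
    have hxgy : x ∈ g y := hgx y hyTx
    have hygy : y ∈ g y := hg2 y hyTx
    have hsub2 : ({x, y} : Finset V) ⊆ T.filter (fun t => t ∈ g y) := by
      intro v hv
      simp only [Finset.mem_insert, Finset.mem_singleton] at hv
      rcases hv with rfl | rfl
      · exact Finset.mem_filter.2 ⟨hxT, hxgy⟩
      · exact Finset.mem_filter.2 ⟨hyT, hygy⟩
    have hge2 : 2 ≤ k (g y) := by
      calc 2 = ({x, y} : Finset V).card := (Finset.card_pair (Ne.symm hyx)).symm
      _ ≤ _ := Finset.card_le_card hsub2
    have hne3 : k (g y) ≠ 3 := by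
      intro h
      have : g y ∈ E.filter (fun e => k e = 3) := Finset.mem_filter.2 ⟨hgyE, h⟩
      rw [hR, Finset.mem_singleton] at this
      exact hgyR this
    have hne4 : k (g y) ≠ 4 := by
      intro h
      have : g y ∈ E.filter (fun e => k e = 4) := Finset.mem_filter.2 ⟨hgyE, h⟩
      rw [hQ, Finset.mem_singleton] at this
      exact hgyQ this
    have hne5 : k (g y) ≠ 5 := by
      intro h
      have hmem5 : g y ∈ E.filter (fun e => k e = 5) := Finset.mem_filter.2 ⟨hgyE, h⟩
      have : 0 < n 5 := Finset.card_pos.2 ⟨g y, hmem5⟩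
      omega
    have hk2 : k (g y) = 2 := by
      have := hk_le (g y) hgyE
      omega
    refine ⟨hgyQ, hgyR, ?_⟩
    exact (Finset.eq_of_subset_of_card_le hsub2
      (by rw [Finset.card_pair (Ne.symm hyx)]; exact le_of_eq hk2)).symm
  have hka := hkg a hamem
  have hkb := hkg b hbmem
  have heab : g a ≠ g b := by
    intro h
    have h1 := hka.2.2
    have h2 := hkb.2.2
    rw [h] at h1
    rw [h1] at h2
    have : b ∈ ({x, a} : Finset V) := by rw [h2]; simp
    simp only [Finset.mem_insert, Finset.mem_singleton] at this
    rcases this with rfl | rfl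
    · exact (Finset.mem_erase.1 hbTx).1 rfl
    · exact hab.symm rfl
  -- Ex = {R, g a, g b}
  have hEx : E.filter (fun e => x ∈ e) = {R, g a, g b} := by
    have hsub : ({R, g a, g b} : Finset (Finset V)) ⊆ E.filter (fun e => x ∈ e) := by
      intro e he
      simp only [Finset.mem_insert, Finset.mem_singleton] at he
      rcases he with rfl | rfl | rfl
      · exact Finset.mem_filter.2 ⟨hRE, hxR⟩
      · exact hg1 a haTx
      · exact hg1 b hbTx
    have hR_nm : R ∉ ({g a, g b} : Finset (Finset V)) := by
      simp only [Finset.mem_insert, Finset.mem_singleton]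
      push_neg
      exact ⟨fun h => hka.2.1 h.symm, fun h => hkb.2.1 h.symm⟩
    have hga_nm : g a ∉ ({g b} : Finset (Finset V)) := by
      simp only [Finset.mem_singleton]
      exact heab
    have hc3 : ({R, g a, g b} : Finset (Finset V)).card = 3 := by
      rw [Finset.card_insert_of_notMem hR_nm, Finset.card_insert_of_notMem hga_nm,
        Finset.card_singleton]
    exact (Finset.eq_of_subset_of_card_le hsub (by rw [hdegT x hxT, hc3])).symm
  -- the low-degree vertex w of Q
  obtain ⟨w, hwQ, hwT, hwdeg⟩ := hw Q hQE
  have hQw : Q ∈ E.filter (fun e => w ∈ e) := Finset.mem_filter.2 ⟨hQE, hwQ⟩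
  have hf2 : 0 < ((E.filter (fun e => w ∈ e)).erase Q).card := by
    rw [Finset.card_erase_of_mem hQw, hwdeg]
    norm_num
  obtain ⟨f, hf⟩ := Finset.card_pos.1 hf2
  have hfQ : f ≠ Q := (Finset.mem_erase.1 hf).1
  have hfmem := Finset.mem_of_mem_erase hf
  have hfE : f ∈ E := (Finset.mem_filter.1 hfmem).1
  have hwf : w ∈ f := (Finset.mem_filter.1 hfmem).2
  -- w ∈ Q ∩ f
  have hwQf : w ∈ Q ∩ f := Finset.mem_inter.2 ⟨hwQ, hwf⟩
  -- f contains some element of T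
  obtain ⟨t2, ht2T, ht2f⟩ := hTedge f hfE
  -- final case analysis
  by_cases hfR : f = R
  · -- w ∈ Q ∩ R = {c, d} ⊆ T, contradiction
    rw [hfR] at hwQf
    rw [← hQRset] at hwQf
    simp only [Finset.mem_insert, Finset.mem_singleton] at hwQf
    rcases hwQf with rfl | rfl
    · exact hwT hcT
    · exact hwT hdT
  · by_cases ht2x : t2 = x
    · -- f ∈ Ex, f ≠ R so f = g a or g b
      have hfEx : f ∈ E.filter (fun e => x ∈ e) := Finset.mem_filter.2 ⟨hfE, ht2x ▸ ht2f⟩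
      rw [hEx] at hfEx
      simp only [Finset.mem_insert, Finset.mem_singleton] at hfEx
      rcases hfEx with rfl | rfl | rfl
      · exact hfR rfl
      · -- f = g a : Q ∩ g a = {a} since a ∈ both and card 1
        have hcard1 : (Q ∩ g a).card = 1 := hQf1 (g a) (hgE a haTx) hka.1 hka.2.1
        have haQf : a ∈ Q ∩ g a := Finset.mem_inter.2 ⟨haQ, hg2 a haTx⟩
        obtain ⟨v, hv⟩ := Finset.card_eq_one.1 hcard1
        rw [hv, Finset.mem_singleton] at haQf hwQf
        rw [hwQf, ← haQf] at hwT
        exact hwT haT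
      · have hcard1 : (Q ∩ g b).card = 1 := hQf1 (g b) (hgE b hbTx) hkb.1 hkb.2.1
        have hbQf : b ∈ Q ∩ g b := Finset.mem_inter.2 ⟨hbQ, hg2 b hbTx⟩
        obtain ⟨v, hv⟩ := Finset.card_eq_one.1 hcard1
        rw [hv, Finset.mem_singleton] at hbQf hwQf
        rw [hwQf, ← hbQf] at hwT
        exact hwT hbT
    · -- t2 ≠ x : t2 ∈ Q, so Q ∩ f ∋ t2 and w, card 1 forces w = t2 ∈ T
      have ht2Q : t2 ∈ Q := by
        have : t2 ∈ T.erase x := Finset.mem_erase.2 ⟨ht2x, ht2T⟩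
        rw [← hKQ] at this
        exact (Finset.mem_filter.1 this).2
      have hcard1 : (Q ∩ f).card = 1 := hQf1 f hfE hfQ hfR
      have ht2Qf : t2 ∈ Q ∩ f := Finset.mem_inter.2 ⟨ht2Q, ht2f⟩
      obtain ⟨v, hv⟩ := Finset.card_eq_one.1 hcard1
      rw [hv, Finset.mem_singleton] at ht2Qf hwQf
      rw [hwQf, ← ht2Qf] at hwT
      exact hwT ht2T


private lemma exists_deg3_part (part : V → Fin 6) (E : Finset (Finset V))
    (hp : Partite 6 part E) (hi : Intersecting E) (h8 : E.card = 8)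
    (hτ : coverNum E = 4) (i : Fin 6) : ∃ v : V, part v = i ∧ deg E v = 3 := by
  classical
  by_contra hno
  push_neg at hno
  obtain ⟨e00, he00⟩ : E.Nonempty := by
    rw [← Finset.card_pos, h8]
    norm_num
  obtain ⟨v0, hv00, -⟩ := hi e00 he00 e00 he00
  set U := E.biUnion id with hU
  have hUe : ∀ {e : Finset V}, e ∈ E → ∀ {v : V}, v ∈ e → v ∈ U := by
    intro e he v hv
    exact Finset.mem_biUnion.2 ⟨e, he, hv⟩
  have hdeg_eq : ∀ v : V, deg E v = (E.filter (fun e => v ∈ e)).card := fun v => rfl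
  have hdegU : ∀ v ∈ U, 1 ≤ deg E v := by
    intro v hv
    obtain ⟨e, he, hve⟩ := Finset.mem_biUnion.1 hv
    rw [hdeg_eq]
    exact Finset.card_pos.2 ⟨e, Finset.mem_filter.2 ⟨he, hve⟩⟩
  have hdeg3 : ∀ v, deg E v ≤ 3 := deg_le_three E hi h8 hτ v0
  set T := U.filter (fun v => deg E v = 3) with hT
  have hTmem : ∀ t ∈ T, deg E t = 3 := fun t ht => (Finset.mem_filter.1 ht).2
  have hdegT : ∀ t ∈ T, (E.filter (fun e => t ∈ e)).card = 3 := by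
    intro t ht
    rw [← hdeg_eq]
    exact hTmem t ht
  have hTof : ∀ v, deg E v = 3 → v ∈ T := by
    intro v h3
    refine Finset.mem_filter.2 ⟨?_, h3⟩
    have hpos : 0 < (E.filter (fun e => v ∈ e)).card := by
      rw [← hdeg_eq, h3]
      norm_num
    obtain ⟨e, he⟩ := Finset.card_pos.1 hpos
    exact hUe (Finset.mem_filter.1 he).1 (Finset.mem_filter.1 he).2
  have hTedge : ∀ e ∈ E, ∃ t ∈ T, t ∈ e := by
    intro e he
    obtain ⟨v, hv, h3⟩ := exists_deg3_mem part E hp hi h8 hτ v0 he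
    exact ⟨v, hTof v h3, hv⟩
  have hTpart : ∀ t ∈ T, part t ≠ i := fun t ht hpi => hno t hpi (hTmem t ht)
  have hTcard_ge : 4 ≤ T.card := no_small_cover E hτ T (fun e he => hTedge e he)
  have hTinj : ∀ t ∈ T, ∀ u ∈ T, part t = part u → t = u := by
    intro t ht u hu hpart
    by_contra hne
    exact same_part_deg3 part E hp hi h8 hτ v0 (hTmem t ht) (hTmem u hu) hne hpart
  have himgcard : (T.image part).card = T.card :=
    Finset.card_image_of_injOn (fun t ht u hu h => hTinj t ht u hu h)
  have himgsub : T.image part ⊆ Finset.univ.erase i := by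
    intro j hj
    obtain ⟨t, ht, rfl⟩ := Finset.mem_image.1 hj
    exact Finset.mem_erase.2 ⟨hTpart t ht, Finset.mem_univ _⟩
  have herasecard : (Finset.univ.erase i).card = 5 := by
    rw [Finset.card_erase_of_mem (Finset.mem_univ _)]
    simp
  have hTcard_le : T.card ≤ 5 := by
    have := Finset.card_le_card himgsub
    omega
  have hclique : ∀ t ∈ T, ∀ u ∈ T, t ≠ u →
      1 ≤ (E.filter (fun e => t ∈ e ∧ u ∈ e)).card := by
    intro t ht u hu htu
    by_contra h
    push_neg at h
    have hempty : ∀ e ∈ E, ¬(t ∈ e ∧ u ∈ e) := by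
      intro e he hc
      have : 0 < (E.filter (fun e => t ∈ e ∧ u ∈ e)).card :=
        Finset.card_pos.2 ⟨e, Finset.mem_filter.2 ⟨he, hc⟩⟩
      omega
    exact deg3_share E hi h8 hτ v0 (hTmem t ht) (hTmem u hu) hempty
  -- global degree sums
  have hUsub : ∀ {e : Finset V}, e ∈ E → (U.filter (fun v => v ∈ e)) = e := by
    intro e he
    ext v
    simp only [Finset.mem_filter]
    exact ⟨fun h => h.2, fun h => ⟨hUe he h, h⟩⟩
  have hsum_deg : ∑ v ∈ U, deg E v = 48 := by
    simp only [hdeg_eq]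
    rw [dc1 U E (fun v e => v ∈ e)]
    have hcongr : ∀ e ∈ E, (U.filter (fun v => v ∈ e)).card = 6 := by
      intro e he
      rw [hUsub he]
      exact edge_card part E hp he
    rw [Finset.sum_congr rfl hcongr, Finset.sum_const, h8]
    rfl
  set Ψ := ∑ e ∈ E, ∑ f ∈ E.erase e, (e ∩ f).card with hΨdef
  have hUsub2 : ∀ {e f : Finset V}, e ∈ E → f ∈ E →
      (U.filter (fun v => v ∈ e ∧ v ∈ f)) = e ∩ f := by
    intro e f he hf
    ext v
    simp only [Finset.mem_filter, Finset.mem_inter]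
    exact ⟨fun h => h.2, fun h => ⟨hUe he h.1, h⟩⟩
  have hsq : ∑ v ∈ U, deg E v * deg E v = 48 + Ψ := by
    simp only [hdeg_eq]
    rw [dc2 U E E (fun v e => v ∈ e)]
    have hstep : ∀ e ∈ E, ∑ f ∈ E, (U.filter (fun v => v ∈ e ∧ v ∈ f)).card
        = 6 + ∑ f ∈ E.erase e, (e ∩ f).card := by
      intro e he
      rw [Finset.sum_congr rfl (fun f hf => by rw [hUsub2 he hf])]
      rw [← Finset.add_sum_erase E _ he]
      congr 1
      rw [Finset.inter_self]
      exact edge_card part E hp he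
    rw [Finset.sum_congr rfl hstep, Finset.sum_add_distrib, Finset.sum_const, h8, ← hΨdef]
    rfl
  have hge7 : ∀ g ∈ E, 7 ≤ ∑ f ∈ E.erase g, (g ∩ f).card := by
    intro g hg
    have h7 : (E.erase g).card = 7 := by rw [Finset.card_erase_of_mem hg, h8]
    have := sum_ge_card (E.erase g) _ (fun f hf => by
      obtain ⟨x, hx1, hx2⟩ := hi g hg f (Finset.mem_of_mem_erase hf)
      exact Finset.card_pos.2 ⟨x, Finset.mem_inter.2 ⟨hx1, hx2⟩⟩)
    omega
  have hΨ_ge56 : 56 ≤ Ψ := by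
    rw [hΨdef]
    calc (56 : ℕ) = 8 * 7 := rfl
    _ = E.card * 7 := by rw [h8]
    _ ≤ ∑ e ∈ E, ∑ f ∈ E.erase e, (e ∩ f).card := by
        have := Finset.card_nsmul_le_sum E _ 7 hge7
        rwa [smul_eq_mul] at this
  set D := (U.filter (fun v => deg E v = 2)).card with hD
  have hdd : ∑ v ∈ U, deg E v * (deg E v - 1) = 6 * T.card + 2 * D := by
    rw [← Finset.sum_filter_add_sum_filter_not U (fun v => deg E v = 3)]
    have h1 : ∑ v ∈ U.filter (fun v => deg E v = 3), deg E v * (deg E v - 1)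
        = 6 * T.card := by
      have hcongr : ∀ v ∈ U.filter (fun v => deg E v = 3), deg E v * (deg E v - 1) = 6 := by
        intro v hv
        rw [(Finset.mem_filter.1 hv).2]
      rw [Finset.sum_congr rfl hcongr, Finset.sum_const, smul_eq_mul]
      have : T.card = (U.filter (fun v => deg E v = 3)).card := by rw [hT]
      omega
    have h2 : ∑ v ∈ U.filter (fun v => ¬ deg E v = 3), deg E v * (deg E v - 1)
        = 2 * D := by
      rw [← Finset.sum_filter_add_sum_filter_not (U.filter (fun v => ¬ deg E v = 3))
        (fun v => deg E v = 2)]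
      have h2a : ∑ v ∈ (U.filter (fun v => ¬ deg E v = 3)).filter (fun v => deg E v = 2),
          deg E v * (deg E v - 1) = 2 * D := by
        have heq : (U.filter (fun v => ¬ deg E v = 3)).filter (fun v => deg E v = 2)
            = U.filter (fun v => deg E v = 2) := by
          ext v
          simp only [Finset.mem_filter]
          constructor
          · rintro ⟨⟨h1, -⟩, h3⟩
            exact ⟨h1, h3⟩
          · rintro ⟨h1, h2'⟩
            exact ⟨⟨h1, by omega⟩, h2'⟩
        rw [heq]
        have hcongr : ∀ v ∈ U.filter (fun v => deg E v = 2),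
            deg E v * (deg E v - 1) = 2 := by
          intro v hv
          rw [(Finset.mem_filter.1 hv).2]
        rw [Finset.sum_congr rfl hcongr, Finset.sum_const, smul_eq_mul, hD]
        omega
      have h2b : ∑ v ∈ (U.filter (fun v => ¬ deg E v = 3)).filter (fun v => ¬ deg E v = 2),
          deg E v * (deg E v - 1) = 0 := by
        apply Finset.sum_eq_zero
        intro v hv
        have hv1 := Finset.mem_filter.1 hv
        have hv2 := Finset.mem_filter.1 hv1.1
        have hvU : v ∈ U := hv2.1
        have hle := hdeg3 v
        have hge := hdegU v hvU
        have : deg E v = 1 := by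
          have h3 := hv2.2
          have h2' := hv1.2
          omega
        rw [this]
        rfl
      omega
    omega
  have hΨ_eq : Ψ = 6 * T.card + 2 * D := by
    have h1 : ∑ v ∈ U, deg E v * deg E v
        = ∑ v ∈ U, deg E v + ∑ v ∈ U, deg E v * (deg E v - 1) := by
      rw [← Finset.sum_add_distrib]
      exact Finset.sum_congr rfl fun v _ => nat_sq _
    omega
  have hpart_sum : ∀ j : Fin 6, ∑ v ∈ U.filter (fun v => part v = j), deg E v = 8 := by
    intro j
    simp only [hdeg_eq]
    rw [dc1 (U.filter (fun v => part v = j)) E (fun v e => v ∈ e)]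
    have hstep : ∀ e ∈ E,
        ((U.filter (fun v => part v = j)).filter (fun v => v ∈ e)).card = 1 := by
      intro e he
      have heq : (U.filter (fun v => part v = j)).filter (fun v => v ∈ e)
          = e.filter (fun v => part v = j) := by
        ext v
        simp only [Finset.mem_filter]
        constructor
        · rintro ⟨⟨-, h2⟩, h3⟩
          exact ⟨h3, h2⟩
        · rintro ⟨h1, h2⟩
          exact ⟨⟨hUe he h1, h2⟩, h1⟩
      rw [heq]
      exact hp e he j
    rw [Finset.sum_congr rfl hstep, Finset.sum_const, h8]
    rfl
  set d2 : Fin 6 → ℕ := fun j => (U.filter (fun v => part v = j ∧ deg E v = 2)).card with hd2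
  have hDsum : D = ∑ j : Fin 6, d2 j := by
    rw [hD, Finset.card_eq_sum_card_fiberwise (f := part) (t := Finset.univ)
      (fun x _ => Finset.mem_univ _)]
    refine Finset.sum_congr rfl fun j _ => ?_
    congr 1
    ext v
    simp only [Finset.mem_filter]
    tauto
  have hksub : ∀ j : Fin 6, (U.filter (fun v => part v = j ∧ deg E v = 2))
      ⊆ U.filter (fun v => part v = j) := by
    intro j v hv
    have := Finset.mem_filter.1 hv
    exact Finset.mem_filter.2 ⟨this.1, this.2.1⟩
  have hcap2 : ∀ j : Fin 6, ∀ t ∈ T, part t = j → d2 j ≤ 2 := by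
    intro j t ht hpj
    by_contra hgt
    push_neg at hgt
    obtain ⟨S', hS'sub, hS'card⟩ := Finset.exists_subset_card_eq
      (s := (U.filter (fun v => part v = j ∧ deg E v = 2))) (n := 3) (by
        have : d2 j = (U.filter (fun v => part v = j ∧ deg E v = 2)).card := rfl
        omega)
    have htP : t ∈ U.filter (fun v => part v = j) :=
      Finset.mem_filter.2 ⟨(Finset.mem_filter.1 ht).1, hpj⟩
    have htS' : t ∉ S' := by
      intro hmem
      have h2 := (Finset.mem_filter.1 (hS'sub hmem)).2.2
      have h3 := hTmem t ht
      omega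
    have hsub2 : insert t S' ⊆ U.filter (fun v => part v = j) := by
      intro v hv
      rcases Finset.mem_insert.1 hv with rfl | hv'
      · exact htP
      · exact hksub j (hS'sub hv')
    have hS'deg : ∑ v ∈ S', deg E v = 6 := by
      rw [Finset.sum_congr rfl (fun v hv => (Finset.mem_filter.1 (hS'sub hv)).2.2),
        Finset.sum_const, hS'card]
      rfl
    have hsum9 : 9 ≤ ∑ v ∈ insert t S', deg E v := by
      rw [Finset.sum_insert htS', hTmem t ht]
      omega
    have hle8 : ∑ v ∈ insert t S', deg E v ≤ ∑ v ∈ U.filter (fun v => part v = j), deg E v :=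
      Finset.sum_le_sum_of_subset hsub2
    rw [hpart_sum j] at hle8
    omega
  have hcap4 : ∀ j : Fin 6, (∀ t ∈ T, part t ≠ j) → d2 j ≤ 4 := by
    intro j hnoT
    by_contra hgt
    push_neg at hgt
    obtain ⟨S', hS'sub, hS'card⟩ := Finset.exists_subset_card_eq
      (s := (U.filter (fun v => part v = j ∧ deg E v = 2))) (n := 5) (by
        have : d2 j = (U.filter (fun v => part v = j ∧ deg E v = 2)).card := rfl
        omega)
    have hS'deg : ∑ v ∈ S', deg E v = 10 := by
      rw [Finset.sum_congr rfl (fun v hv => (Finset.mem_filter.1 (hS'sub hv)).2.2),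
        Finset.sum_const, hS'card]
      rfl
    have hle8 : ∑ v ∈ S', deg E v ≤ ∑ v ∈ U.filter (fun v => part v = j), deg E v :=
      Finset.sum_le_sum_of_subset (hS'sub.trans (hksub j))
    rw [hpart_sum j] at hle8
    omega
  have hT45 : T.card = 4 ∨ T.card = 5 := by omega
  rcases hT45 with hT4 | hT5
  · -- |T| = 4
    have hD16 : D ≤ 16 := by
      rw [hDsum]
      have hle : ∀ j : Fin 6, d2 j ≤ if j ∈ T.image part then 2 else 4 := by
        intro j
        split_ifs with hj
        · obtain ⟨t, ht, hpj⟩ := Finset.mem_image.1 hj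
          exact hcap2 j t ht hpj
        · exact hcap4 j (fun t ht hpj => hj (Finset.mem_image.2 ⟨t, ht, hpj⟩))
      calc ∑ j : Fin 6, d2 j ≤ ∑ j : Fin 6, (if j ∈ T.image part then 2 else 4) :=
        Finset.sum_le_sum (fun j _ => hle j)
      _ = 16 := by
        rw [Finset.sum_ite, Finset.sum_const, Finset.sum_const]
        have hfeq : Finset.univ.filter (fun j => j ∈ T.image part) = T.image part := by
          ext j
          simp
        have hc1 : (Finset.univ.filter (fun j => j ∈ T.image part)).card = 4 := by
          rw [hfeq, himgcard, hT4]
        have hc2 : (Finset.univ.filter (fun j => ¬ j ∈ T.image part)).card = 2 := by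
          have := Finset.card_filter_add_card_filter_not
            (s := (Finset.univ : Finset (Fin 6))) (p := fun j => j ∈ T.image part)
          have hcu : (Finset.univ : Finset (Fin 6)).card = 6 := by simp
          omega
        rw [hc1, hc2]
        rfl
    have hΨ56 : Ψ = 56 := by omega
    have hinner7 : ∀ e ∈ E, ∑ f ∈ E.erase e, (e ∩ f).card = 7 := by
      intro e he
      by_contra hne
      have h8e : 8 ≤ ∑ f ∈ E.erase e, (e ∩ f).card := by
        have := hge7 e he
        omega
      have hsplit : (∑ f ∈ E.erase e, (e ∩ f).card)
          + ∑ g ∈ E.erase e, ∑ f ∈ E.erase g, (g ∩ f).card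
          = ∑ g ∈ E, ∑ f ∈ E.erase g, (g ∩ f).card :=
        Finset.add_sum_erase E (fun g => ∑ f ∈ E.erase g, (g ∩ f).card) he
      have hrest : 49 ≤ ∑ g ∈ E.erase e, ∑ f ∈ E.erase g, (g ∩ f).card := by
        have h7' : (E.erase e).card = 7 := by rw [Finset.card_erase_of_mem he, h8]
        have := Finset.card_nsmul_le_sum (E.erase e)
          (fun g => ∑ f ∈ E.erase g, (g ∩ f).card) 7
          (fun g hg => hge7 g (Finset.mem_of_mem_erase hg))
        rw [h7', smul_eq_mul] at this
        omega
      rw [← hΨdef] at hsplit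
      omega
    have hpair1 : ∀ e ∈ E, ∀ f ∈ E, e ≠ f → (e ∩ f).card = 1 := by
      intro e he f hf hef
      have h7 : (E.erase e).card = 7 := by rw [Finset.card_erase_of_mem he, h8]
      have hle : ∑ f ∈ E.erase e, (e ∩ f).card ≤ (E.erase e).card := by
        rw [hinner7 e he, h7]
      refine sum_all_one (E.erase e) (fun f => (e ∩ f).card) (fun g hg => ?_) hle f
        (Finset.mem_erase.2 ⟨Ne.symm hef, hf⟩)
      obtain ⟨x, hx1, hx2⟩ := hi e he g (Finset.mem_of_mem_erase hg)
      exact Finset.card_pos.2 ⟨x, Finset.mem_inter.2 ⟨hx1, hx2⟩⟩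
    exact case4 E h8 T hT4 hdegT hTedge hclique hpair1
  · -- |T| = 5
    have himg5 : T.image part = Finset.univ.erase i :=
      Finset.eq_of_subset_of_card_le himgsub (by rw [himgcard, hT5, herasecard])
    have hcap_all : ∀ j : Fin 6, j ≠ i → d2 j ≤ 2 := by
      intro j hj
      have hjmem : j ∈ T.image part := by
        rw [himg5]
        exact Finset.mem_erase.2 ⟨hj, Finset.mem_univ _⟩
      obtain ⟨t, ht, hpj⟩ := Finset.mem_image.1 hjmem
      exact hcap2 j t ht hpj
    have herase_sum : ∑ j ∈ Finset.univ.erase i, d2 j ≤ 10 := by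
      have h : ∑ j ∈ Finset.univ.erase i, d2 j ≤ (Finset.univ.erase i).card • 2 :=
        Finset.sum_le_card_nsmul (Finset.univ.erase i) d2 2
          (fun j hj => hcap_all j (Finset.mem_erase.1 hj).1)
      rw [herasecard, smul_eq_mul] at h
      omega
    have hDsplit : D = d2 i + ∑ j ∈ Finset.univ.erase i, d2 j := by
      rw [hDsum]
      exact (Finset.add_sum_erase Finset.univ d2 (Finset.mem_univ i)).symm
    have hd2i4 : d2 i ≤ 4 := hcap4 i (fun t ht => hTpart t ht)
    have hD14 : D ≤ 14 := by omega
    by_cases hall1 : ∀ t ∈ T, ∀ u ∈ T, t ≠ u → (E.filter (fun e => t ∈ e ∧ u ∈ e)).card = 1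
    · exact case5A E h8 T hT5 hdegT hTedge hall1
    push_neg at hall1
    obtain ⟨t0, ht0, u0, hu0, htu0, hN1⟩ := hall1
    have hNge2 : 2 ≤ (E.filter (fun e => t0 ∈ e ∧ u0 ∈ e)).card := by
      have := hclique t0 ht0 u0 hu0 htu0
      omega
    obtain ⟨e0, he0m, f0, hf0m, hef0⟩ := Finset.one_lt_card.1 (by omega :
      1 < (E.filter (fun e => t0 ∈ e ∧ u0 ∈ e)).card)
    have he0' := Finset.mem_filter.1 he0m
    have hf0' := Finset.mem_filter.1 hf0m
    have hcef2 : 2 ≤ (e0 ∩ f0).card := by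
      have hs : ({t0, u0} : Finset V) ⊆ e0 ∩ f0 := by
        intro v hv
        simp only [Finset.mem_insert, Finset.mem_singleton] at hv
        rcases hv with rfl | rfl
        · exact Finset.mem_inter.2 ⟨he0'.2.1, hf0'.2.1⟩
        · exact Finset.mem_inter.2 ⟨he0'.2.2, hf0'.2.2⟩
      calc 2 = ({t0, u0} : Finset V).card := (Finset.card_pair htu0).symm
      _ ≤ _ := Finset.card_le_card hs
    have hf0e : f0 ∈ E.erase e0 := Finset.mem_erase.2 ⟨Ne.symm hef0, hf0'.1⟩
    have he0f : e0 ∈ E.erase f0 := Finset.mem_erase.2 ⟨hef0, he0'.1⟩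
    have hcef2' : 2 ≤ (f0 ∩ e0).card := by
      rw [Finset.inter_comm]
      exact hcef2
    have hone_e0 : ∀ g ∈ E.erase e0, 1 ≤ (e0 ∩ g).card := by
      intro g hg
      obtain ⟨x, hx1, hx2⟩ := hi e0 he0'.1 g (Finset.mem_of_mem_erase hg)
      exact Finset.card_pos.2 ⟨x, Finset.mem_inter.2 ⟨hx1, hx2⟩⟩
    have hone_f0 : ∀ g ∈ E.erase f0, 1 ≤ (f0 ∩ g).card := by
      intro g hg
      obtain ⟨x, hx1, hx2⟩ := hi f0 hf0'.1 g (Finset.mem_of_mem_erase hg)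
      exact Finset.card_pos.2 ⟨x, Finset.mem_inter.2 ⟨hx1, hx2⟩⟩
    have h7e0 : (E.erase e0).card = 7 := by rw [Finset.card_erase_of_mem he0'.1, h8]
    have h7f0 : (E.erase f0).card = 7 := by rw [Finset.card_erase_of_mem hf0'.1, h8]
    have h8e0 : 8 ≤ ∑ f ∈ E.erase e0, (e0 ∩ f).card := by
      have h : (E.erase e0).card + 1 ≤ ∑ f ∈ E.erase e0, (e0 ∩ f).card :=
        sum_one_special (E.erase e0) (fun f => (e0 ∩ f).card) hone_e0 hf0e hcef2
      omega
    have h8f0 : 8 ≤ ∑ f ∈ E.erase f0, (f0 ∩ f).card := by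
      have h : (E.erase f0).card + 1 ≤ ∑ f ∈ E.erase f0, (f0 ∩ f).card :=
        sum_one_special (E.erase f0) (fun f => (f0 ∩ f).card) hone_f0 he0f hcef2'
      omega
    have hdecomp : Ψ = (∑ f ∈ E.erase e0, (e0 ∩ f).card)
        + ((∑ f ∈ E.erase f0, (f0 ∩ f).card)
          + ∑ g ∈ (E.erase e0).erase f0, ∑ f ∈ E.erase g, (g ∩ f).card) := by
      rw [hΨdef, ← Finset.add_sum_erase E (fun g => ∑ f ∈ E.erase g, (g ∩ f).card) he0'.1,
        ← Finset.add_sum_erase (E.erase e0) (fun g => ∑ f ∈ E.erase g, (g ∩ f).card) hf0e]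
    have hc6 : ((E.erase e0).erase f0).card = 6 := by
      rw [Finset.card_erase_of_mem hf0e, h7e0]
    have hrest42 : 42 ≤ ∑ g ∈ (E.erase e0).erase f0, ∑ f ∈ E.erase g, (g ∩ f).card := by
      have := Finset.card_nsmul_le_sum ((E.erase e0).erase f0)
        (fun g => ∑ f ∈ E.erase g, (g ∩ f).card) 7
        (fun g hg => hge7 g (Finset.mem_of_mem_erase (Finset.mem_of_mem_erase hg)))
      rw [hc6, smul_eq_mul] at this
      omega
    have hΨ58 : Ψ = 58 := by omega
    have hsum_e0 : ∑ f ∈ E.erase e0, (e0 ∩ f).card = 8 := by omega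
    have hsum_f0 : ∑ f ∈ E.erase f0, (f0 ∩ f).card = 8 := by omega
    have hrest_eq : ∑ g ∈ (E.erase e0).erase f0, ∑ f ∈ E.erase g, (g ∩ f).card = 42 := by omega
    have hinner7' : ∀ g ∈ (E.erase e0).erase f0, ∑ f ∈ E.erase g, (g ∩ f).card = 7 := by
      intro g hg
      by_contra hne
      have hgE : g ∈ E := Finset.mem_of_mem_erase (Finset.mem_of_mem_erase hg)
      have h8g : 8 ≤ ∑ f ∈ E.erase g, (g ∩ f).card := by
        have := hge7 g hgE
        omega
      have hsplit : (∑ f ∈ E.erase g, (g ∩ f).card)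
          + ∑ g' ∈ ((E.erase e0).erase f0).erase g, ∑ f ∈ E.erase g', (g' ∩ f).card
          = ∑ g' ∈ (E.erase e0).erase f0, ∑ f ∈ E.erase g', (g' ∩ f).card :=
        Finset.add_sum_erase ((E.erase e0).erase f0)
          (fun g => ∑ f ∈ E.erase g, (g ∩ f).card) hg
      have hc5 : (((E.erase e0).erase f0).erase g).card = 5 := by
        rw [Finset.card_erase_of_mem hg, hc6]
      have hrest2 : 35 ≤ ∑ g' ∈ ((E.erase e0).erase f0).erase g,
          ∑ f ∈ E.erase g', (g' ∩ f).card := by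
        have := Finset.card_nsmul_le_sum (((E.erase e0).erase f0).erase g)
          (fun g' => ∑ f ∈ E.erase g', (g' ∩ f).card) 7
          (fun g' hg' => hge7 g' (Finset.mem_of_mem_erase (Finset.mem_of_mem_erase
            (Finset.mem_of_mem_erase hg'))))
        rw [hc5, smul_eq_mul] at this
        omega
      omega
    have hle_e0 : ∑ f ∈ E.erase e0, (e0 ∩ f).card ≤ (E.erase e0).card + 1 := by omega
    have hle_f0 : ∑ f ∈ E.erase f0, (f0 ∩ f).card ≤ (E.erase f0).card + 1 := by omega
    have he0_spec := sum_one_special_eq (E.erase e0) (fun f => (e0 ∩ f).card) hone_e0 hf0e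
      hcef2 hle_e0
    have hf0_spec := sum_one_special_eq (E.erase f0) (fun f => (f0 ∩ f).card) hone_f0 he0f
      hcef2' hle_f0
    have hcef : (e0 ∩ f0).card = 2 := he0_spec.1
    have hpair : ∀ g ∈ E, ∀ h ∈ E, g ≠ h → ¬(g = e0 ∧ h = f0) → ¬(g = f0 ∧ h = e0) →
        (g ∩ h).card = 1 := by
      intro g hg h hh hgh hc1 hc2
      by_cases hge0 : g = e0
      · subst hge0
        have hhf0 : h ≠ f0 := fun heq => hc1 ⟨rfl, heq⟩
        exact he0_spec.2 h (Finset.mem_erase.2 ⟨Ne.symm hgh, hh⟩) hhf0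
      by_cases hgf0 : g = f0
      · subst hgf0
        have hhe0 : h ≠ e0 := fun heq => hc2 ⟨rfl, heq⟩
        exact hf0_spec.2 h (Finset.mem_erase.2 ⟨Ne.symm hgh, hh⟩) hhe0
      · have hgmem : g ∈ (E.erase e0).erase f0 :=
          Finset.mem_erase.2 ⟨hgf0, Finset.mem_erase.2 ⟨hge0, hg⟩⟩
        have h7g : (E.erase g).card = 7 := by rw [Finset.card_erase_of_mem hg, h8]
        have hle : ∑ f ∈ E.erase g, (g ∩ f).card ≤ (E.erase g).card := by
          rw [hinner7' g hgmem, h7g]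
        refine sum_all_one (E.erase g) (fun f => (g ∩ f).card) (fun f' hf' => ?_) hle h
          (Finset.mem_erase.2 ⟨Ne.symm hgh, hh⟩)
        obtain ⟨x, hx1, hx2⟩ := hi g hg f' (Finset.mem_of_mem_erase hf')
        exact Finset.card_pos.2 ⟨x, Finset.mem_inter.2 ⟨hx1, hx2⟩⟩
    -- D = 14 and part i structure
    have h2D : 6 * T.card + 2 * D = 58 := by omega
    have hD14' : D = 14 := by
      rw [hT5] at h2D
      omega
    have hd2i : d2 i = 4 := by omega
    have hw : ∀ Q ∈ E, ∃ w ∈ Q, w ∉ T ∧ (E.filter (fun e => w ∈ e)).card = 2 := by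
      intro Q hQE
      have hcard1 := hp Q hQE i
      obtain ⟨w, hwmem⟩ := Finset.card_eq_one.1 hcard1
      have hwmem' : w ∈ Q.filter (fun v => part v = i) := by
        rw [hwmem]
        exact Finset.mem_singleton_self w
      have hwQ : w ∈ Q := (Finset.mem_filter.1 hwmem').1
      have hwpart : part w = i := (Finset.mem_filter.1 hwmem').2
      have hwU : w ∈ U := hUe hQE hwQ
      have hwT : w ∉ T := fun hin => hTpart w hin hwpart
      have hw3 : deg E w ≠ 3 := fun h => hno w hwpart h
      have hw1 : deg E w ≠ 1 := by
        intro h1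
        have hc4 : (U.filter (fun v => part v = i ∧ deg E v = 2)).card = 4 := hd2i
        obtain ⟨S', hS'sub, hS'card⟩ := Finset.exists_subset_card_eq
          (s := (U.filter (fun v => part v = i ∧ deg E v = 2))) (n := 4) (by omega)
        have hwS' : w ∉ S' := by
          intro hmem
          have := (Finset.mem_filter.1 (hS'sub hmem)).2.2
          omega
        have hsub2 : insert w S' ⊆ U.filter (fun v => part v = i) := by
          intro v hv
          rcases Finset.mem_insert.1 hv with rfl | hv'
          · exact Finset.mem_filter.2 ⟨hwU, hwpart⟩
          · exact hksub i (hS'sub hv')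
        have hS'deg : ∑ v ∈ S', deg E v = 8 := by
          rw [Finset.sum_congr rfl (fun v hv => (Finset.mem_filter.1 (hS'sub hv)).2.2),
            Finset.sum_const, hS'card]
          rfl
        have hsum9 : 9 ≤ ∑ v ∈ insert w S', deg E v := by
          rw [Finset.sum_insert hwS', h1]
          omega
        have hle8 : ∑ v ∈ insert w S', deg E v
            ≤ ∑ v ∈ U.filter (fun v => part v = i), deg E v :=
          Finset.sum_le_sum_of_subset hsub2
        rw [hpart_sum i] at hle8
        omega
      have hdle := hdeg3 w
      have hdge := hdegU w hwU
      have hw2 : deg E w = 2 := by omega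
      refine ⟨w, hwQ, hwT, ?_⟩
      rw [← hdeg_eq]
      exact hw2
    exact case5B E h8 T hT5 hdegT hTedge hclique e0 f0 he0'.1 hf0'.1 hef0 hcef hpair
      t0 u0 ht0 hu0 htu0 he0'.2.1 hf0'.2.1 he0'.2.2 hf0'.2.2 hw

end StmtAux
theorem stmt5 {V : Type*} (part : V → Fin 6) (E : Finset (Finset V))
    (hp : Partite 6 part E) (hi : Intersecting E) (h8 : E.card = 8)
    (hτ : coverNum E = 4) :
    ∀ i : Fin 6, ∃! v : V, part v = i ∧ deg E v = 3 := by
  intro i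
  obtain ⟨v, hv1, hv2⟩ := StmtAux.exists_deg3_part part E hp hi h8 hτ i
  refine ⟨v, ⟨hv1, hv2⟩, ?_⟩
  rintro u ⟨hu1, hu2⟩
  by_contra hne
  obtain ⟨e00, he00⟩ : E.Nonempty := by
    rw [← Finset.card_pos, h8]
    norm_num
  obtain ⟨v0, hv00, -⟩ := hi e00 he00 e00 he00
  exact StmtAux.same_part_deg3 part E hp hi h8 hτ v0 hu2 hv2 hne (hu1.trans hv1.symm)
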